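/- Let p be a closed Dice program (a sequence of non-recursive function definitions followed by a main expression) and suppose ∅, ∅ ⊢ p : τ ⤳ (φ̂, γ, w). Then for any value v : τ, the unnormalized semantics satisfies ⟦p⟧(v) = WMC((φ̂ ⇔τ v) ∧ γ, w). -/

import Mathlib

/-! The Dice language with Booleans and tuples (no function calls), its
unnormalized denotational semantics, the typed compilation to weighted Boolean
formulas, and the correctness statement relating the two via weighted model
counting. -/

/-- Dice types: `τ ::= Bool | τ1 × τ2`. -/
inductive Ty : Type
  | bool : Ty
  | prod : Ty → Ty → Ty
deriving DecidableEq

/-- Dice values: `v ::= true | false | (v, v)`. -/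
inductive Val : Type
  | bool : Bool → Val
  | pair : Val → Val → Val
deriving DecidableEq

/-- Typing of values. -/
def Val.hasTy : Val → Ty → Bool
  | .bool _, .bool => true
  | .pair v1 v2, .prod τ1 τ2 => v1.hasTy τ1 && v2.hasTy τ2
  | _, _ => false

/-- The (finitely many) values of a given type. -/
def Ty.vals : Ty → List Val
  | .bool => [.bool false, .bool true]
  | .prod τ1 τ2 => τ1.vals.flatMap (fun v1 => τ2.vals.map (fun v2 => .pair v1 v2))

/-- Atomic expressions: variables and values. -/
inductive AExp : Type
  | var : String → AExp
  | val : Val → AExp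

/-- Dice expressions:
`e ::= a | fst a | snd a | (a, a) | let x:τ = e in e | flip θ
     | if a then e else e | observe a | f(a)`. -/
inductive Exp : Type
  | atom : AExp → Exp
  | fst : AExp → Exp
  | snd : AExp → Exp
  | pair : AExp → AExp → Exp
  | letin : String → Ty → Exp → Exp → Exp
  | flip : ℝ → Exp
  | ite : AExp → Exp → Exp → Exp
  | obs : AExp → Exp
  | call : String → AExp → Exp

/-- Substitution of values for free variables in an atomic expression. -/
def AExp.substEnv (ρ : String → Option Val) : AExp → AExp
  | .val v => .val v
  | .var x => match ρ x with
      | some v => .val v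
      | none => .var x

/-- Capture-avoiding substitution of values for free variables: `e[xi ↦ vi]`
for the substitution described by `ρ`. -/
def Exp.substEnv (ρ : String → Option Val) : Exp → Exp
  | .atom a => .atom (a.substEnv ρ)
  | .fst a => .fst (a.substEnv ρ)
  | .snd a => .snd (a.substEnv ρ)
  | .pair a1 a2 => .pair (a1.substEnv ρ) (a2.substEnv ρ)
  | .letin x τ e1 e2 =>
      .letin x τ (e1.substEnv ρ) (e2.substEnv (fun y => if y = x then none else ρ y))
  | .flip θ => .flip θ
  | .ite a e1 e2 => .ite (a.substEnv ρ) (e1.substEnv ρ) (e2.substEnv ρ)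
  | .obs a => .obs (a.substEnv ρ)
  | .call f a => .call f (a.substEnv ρ)

/-- Size of an expression (used for termination of the semantics). -/
def Exp.size : Exp → ℕ
  | .atom _ => 1
  | .fst _ => 1
  | .snd _ => 1
  | .pair _ _ => 1
  | .letin _ _ e1 e2 => e1.size + e2.size + 1
  | .flip _ => 1
  | .ite _ e1 e2 => e1.size + e2.size + 1
  | .obs _ => 1
  | .call _ _ => 1

theorem Exp.size_substEnv (ρ : String → Option Val) (e : Exp) :
    (e.substEnv ρ).size = e.size := by
  induction e generalizing ρ <;> simp [Exp.substEnv, Exp.size, *]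

/-- The unnormalized denotational semantics `⟦e⟧ : Val → ℝ` of a (closed) Dice
expression:
* `⟦v1⟧(v) = 1` if `v = v1` else `0`;
* `⟦fst (v1,v2)⟧(v) = 1` if `v = v1` else `0`, similarly for `snd`;
* `⟦flip θ⟧(true) = θ`, `⟦flip θ⟧(false) = 1 − θ`, `0` on other values;
* `⟦if true then e1 else e2⟧ = ⟦e1⟧`, `⟦if false then e1 else e2⟧ = ⟦e2⟧`;
* `⟦observe v1⟧(v) = 1` if `v1 = true` and `v = true`, else `0`;
* `⟦let x = e1 in e2⟧(v) = Σ_{v'} ⟦e1⟧(v') · ⟦e2[x ↦ v']⟧(v)`, summing over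
  the values `v'` of the annotated type of the bound variable;
* `⟦f(v1)⟧(v) = T(f)(v1)(v)` where `T` is the ambient function table mapping
  function names to conditional distributions.
(Expressions that still contain free variables in evaluation position get the
always-zero semantics, for totality.) -/
noncomputable def Exp.sem (T : String → Val → Val → ℝ) : Exp → Val → ℝ
  | .atom (.val v1), v => if v = v1 then 1 else 0
  | .atom (.var _), _ => 0
  | .fst (.val (.pair v1 _)), v => if v = v1 then 1 else 0
  | .fst _, _ => 0
  | .snd (.val (.pair _ v2)), v => if v = v2 then 1 else 0
  | .snd _, _ => 0
  | .pair (.val v1) (.val v2), v => if v = .pair v1 v2 then 1 else 0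
  | .pair _ _, _ => 0
  | .flip θ, .bool b => if b then θ else 1 - θ
  | .flip _, _ => 0
  | .ite (.val (.bool true)) e1 _, v => e1.sem T v
  | .ite (.val (.bool false)) _ e2, v => e2.sem T v
  | .ite _ _ _, _ => 0
  | .obs (.val (.bool true)), v => if v = .bool true then 1 else 0
  | .obs _, _ => 0
  | .call f (.val v1), v => T f v1 v
  | .call _ (.var _), _ => 0
  | .letin x τ1 e1 e2, v =>
      (τ1.vals.map (fun v' =>
        e1.sem T v' * (e2.substEnv (fun y => if y = x then some v' else none)).sem T v)).sum
termination_by e _ => e.size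
decreasing_by all_goals · simp [Exp.size, Exp.size_substEnv] <;> omega

/-- Propositional formulas over flip variables (numbered by `ℕ`) and program
variables (a program-variable name together with a path of left/right
projections; `false` = left, `true` = right).  The derived names `x_l` and
`x_r` used by the form function are modeled by extending the path. -/
inductive Form : Type
  | tt : Form
  | ff : Form
  | fvar : ℕ → Form
  | pvar : String → List Bool → Form
  | not : Form → Form
  | and : Form → Form → Form
  | or : Form → Form → Form
  | iff : Form → Form → Form

/-- Evaluation of a formula under truth assignments for flip and program
variables. -/
def Form.eval (σ : ℕ → Bool) (ρ : String → List Bool → Bool) : Form → Bool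
  | .tt => true
  | .ff => false
  | .fvar i => σ i
  | .pvar x p => ρ x p
  | .not φ => !(φ.eval σ ρ)
  | .and φ ψ => φ.eval σ ρ && ψ.eval σ ρ
  | .or φ ψ => φ.eval σ ρ || ψ.eval σ ρ
  | .iff φ ψ => φ.eval σ ρ == ψ.eval σ ρ

/-- Tuples of Boolean formulas, shaped like a Dice type. -/
inductive TForm : Type
  | base : Form → TForm
  | pair : TForm → TForm → TForm

/-- The form function: `form_Bool(x) = x` and
`form_{τ1×τ2}(x) = (form_{τ1}(x_l), form_{τ2}(x_r))`, derived names being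
modeled by extending the projection path. -/
def formVar (x : String) : Ty → List Bool → TForm
  | .bool, p => .base (.pvar x p)
  | .prod τ1 τ2, p =>
      .pair (formVar x τ1 (p ++ [false])) (formVar x τ2 (p ++ [true]))

/-- A value interpreted as a (tuple of) constant Boolean formula(s). -/
def Val.toForm : Val → TForm
  | .bool b => .base (if b then .tt else .ff)
  | .pair v1 v2 => .pair v1.toForm v2.toForm

/-- Pointwise iff `φ̂1 ⇔τ φ̂2` (shape mismatch yields the false formula). -/
def TForm.tiff : TForm → TForm → Form
  | .base φ, .base ψ => .iff φ ψ
  | .pair a b, .pair c d => .and (a.tiff c) (b.tiff d)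
  | _, _ => .ff

/-- Broadcasted conjunction `φ ∧τ φ̂`. -/
def TForm.band : TForm → Form → TForm
  | .base ψ, φ => .base (.and φ ψ)
  | .pair a b, φ => .pair (a.band φ) (b.band φ)

/-- Pointwise disjunction `φ̂1 ∨τ φ̂2` (shape mismatch yields the left input). -/
def TForm.tor : TForm → TForm → TForm
  | .base a, .base b => .base (.or a b)
  | .pair a b, .pair c d => .pair (a.tor c) (b.tor d)
  | t, _ => t

/-- The component of a tuple of formulas at a given projection path. -/
def TForm.lookup : TForm → List Bool → Option Form
  | .base φ, [] => some φ
  | .pair a _, false :: p => a.lookup p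
  | .pair _ b, true :: p => b.lookup p
  | _, _ => none

/-- Typed substitution `φ[x ↦τ φ̂]` on a single formula: every program
variable `(x, p)` derived from `x` is replaced by the component of the tuple
`φ̂` at path `p` (this is exactly the effect of the sequential substitutions
`φ[x_l ↦τa φ̂a][x_r ↦τb φ̂b]` of the recursive definition). -/
def Form.tsubst : Form → String → TForm → Form
  | .tt, _, _ => .tt
  | .ff, _, _ => .ff
  | .fvar i, _, _ => .fvar i
  | .pvar y p, x, t =>
      if y = x then (t.lookup p).getD (.pvar y p) else .pvar y p
  | .not φ, x, t => .not (φ.tsubst x t)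
  | .and φ ψ, x, t => .and (φ.tsubst x t) (ψ.tsubst x t)
  | .or φ ψ, x, t => .or (φ.tsubst x t) (ψ.tsubst x t)
  | .iff φ ψ, x, t => .iff (φ.tsubst x t) (ψ.tsubst x t)

/-- Typed substitution on a tuple of formulas (componentwise). -/
def TForm.tsubst : TForm → String → TForm → TForm
  | .base φ, x, t => .base (φ.tsubst x t)
  | .pair a b, x, t => .pair (a.tsubst x t) (b.tsubst x t)

/-- Renaming the flip variables of a formula to fresh ones by shifting them by
`k` (used to model `RefreshFlips`). -/
def Form.shift (k : ℕ) : Form → Form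
  | .tt => .tt
  | .ff => .ff
  | .fvar i => .fvar (i + k)
  | .pvar x p => .pvar x p
  | .not φ => .not (φ.shift k)
  | .and φ ψ => .and (φ.shift k) (ψ.shift k)
  | .or φ ψ => .or (φ.shift k) (ψ.shift k)
  | .iff φ ψ => .iff (φ.shift k) (ψ.shift k)

/-- Flip-variable renaming on tuples of formulas (componentwise). -/
def TForm.shift (k : ℕ) : TForm → TForm
  | .base φ => .base (φ.shift k)
  | .pair a b => .pair (a.shift k) (b.shift k)

/-- Substitution `[xi ↦τi vi]` of values for all program variables of a
formula: each variable `(x, p)` is replaced by the constant component of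
`(ρ x)` at path `p`. -/
def Form.substProg (ρ : String → Val) : Form → Form
  | .tt => .tt
  | .ff => .ff
  | .fvar i => .fvar i
  | .pvar x p => ((Val.toForm (ρ x)).lookup p).getD .ff
  | .not φ => .not (φ.substProg ρ)
  | .and φ ψ => .and (φ.substProg ρ) (ψ.substProg ρ)
  | .or φ ψ => .or (φ.substProg ρ) (ψ.substProg ρ)
  | .iff φ ψ => .iff (φ.substProg ρ) (ψ.substProg ρ)

/-- Compilation of an atomic expression at a type: a variable compiles to its
form, a value to the corresponding tuple of constants. -/
def AExp.compT (Γ : String → Option Ty) : AExp → Ty → Option TForm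
  | .var x, τ => if Γ x = some τ then some (formVar x τ []) else none
  | .val v, τ => if v.hasTy τ then some v.toForm else none

/-- The compiled form of a function `fun f(x:τ1):τ2 { e }`: the formal
argument name, the argument and return types, the compiled tuple of formulas
and accepting formula of the body (over its own local flip variables
`0, …, nflips−1`), and its local weight function. -/
structure FInfo : Type where
  arg : String
  argTy : Ty
  retTy : Ty
  tf : TForm
  gf : Form
  nflips : ℕ
  wf : ℕ → Bool → ℝ

/-- The typed compilation judgment `Γ, Φ ⊢ e : τ ⤳ (φ̂, γ, w)`, producing a tuple
of Boolean formulas `φ̂` shaped like `τ`, an accepting formula `γ`, and a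
weight function `w`.  Freshness of flip variables is modeled by threading a
counter: `TComp Γ e τ n m φ̂ γ w` means `e` compiles using the fresh flip
variables `n, …, m−1`; the weight function is a single global function
constrained at each flip variable (the union of weight functions with disjoint
domains).  `Φ` maps function names to their compiled forms; rule `call`
implements `C-FuncCall`: the stored formulas have their flip variables
replaced by fresh ones (`RefreshFlips`, modeled by shifting into the fresh
range `n, …, n+k−1`) and the actual argument is substituted for the formal
argument. -/
inductive TComp :
    (String → Option Ty) → (String → Option FInfo) →
    Exp → Ty → ℕ → ℕ → TForm → Form → (ℕ → Bool → ℝ) → Prop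
  | atom (Γ : String → Option Ty) (Φ : String → Option FInfo) (a : AExp) (τ : Ty) (t : TForm) (n : ℕ)
      (w : ℕ → Bool → ℝ) (h : a.compT Γ τ = some t) :
      TComp Γ Φ (.atom a) τ n n t .tt w
  | fst (Γ : String → Option Ty) (Φ : String → Option FInfo) (a : AExp) (τ1 τ2 : Ty) (t1 t2 : TForm) (n : ℕ)
      (w : ℕ → Bool → ℝ) (h : a.compT Γ (.prod τ1 τ2) = some (.pair t1 t2)) :
      TComp Γ Φ (.fst a) τ1 n n t1 .tt w
  | snd (Γ : String → Option Ty) (Φ : String → Option FInfo) (a : AExp) (τ1 τ2 : Ty) (t1 t2 : TForm) (n : ℕ)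
      (w : ℕ → Bool → ℝ) (h : a.compT Γ (.prod τ1 τ2) = some (.pair t1 t2)) :
      TComp Γ Φ (.snd a) τ2 n n t2 .tt w
  | pair (Γ : String → Option Ty) (Φ : String → Option FInfo) (a1 a2 : AExp) (τ1 τ2 : Ty) (t1 t2 : TForm)
      (n : ℕ) (w : ℕ → Bool → ℝ)
      (h1 : a1.compT Γ τ1 = some t1) (h2 : a2.compT Γ τ2 = some t2) :
      TComp Γ Φ (.pair a1 a2) (.prod τ1 τ2) n n (.pair t1 t2) .tt w
  | flip (Γ : String → Option Ty) (Φ : String → Option FInfo) (θ : ℝ) (n : ℕ) (w : ℕ → Bool → ℝ)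
      (h0 : 0 ≤ θ) (h1 : θ ≤ 1) (hwt : w n true = θ) (hwf : w n false = 1 - θ) :
      TComp Γ Φ (.flip θ) .bool n (n + 1) (.base (.fvar n)) .tt w
  | obs (Γ : String → Option Ty) (Φ : String → Option FInfo) (a : AExp) (φa : Form) (n : ℕ)
      (w : ℕ → Bool → ℝ) (h : a.compT Γ .bool = some (.base φa)) :
      TComp Γ Φ (.obs a) .bool n n (.base .tt) φa w
  | ite (Γ : String → Option Ty) (Φ : String → Option FInfo) (a : AExp) (eT eE : Exp) (τ : Ty)
      (φg : Form) (tT tE : TForm) (γT γE : Form) (n m k : ℕ) (w : ℕ → Bool → ℝ)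
      (hg : a.compT Γ .bool = some (.base φg))
      (hT : TComp Γ Φ eT τ n m tT γT w) (hE : TComp Γ Φ eE τ m k tE γE w) :
      TComp Γ Φ (.ite a eT eE) τ n k
        ((tT.band φg).tor (tE.band (.not φg)))
        (.or (.and φg γT) (.and (.not φg) γE)) w
  | letin (Γ : String → Option Ty) (Φ : String → Option FInfo) (x : String) (τ1 τ2 : Ty) (e1 e2 : Exp)
      (t1 t2 : TForm) (γ1 γ2 : Form) (n m k : ℕ) (w : ℕ → Bool → ℝ)
      (h1 : TComp Γ Φ e1 τ1 n m t1 γ1 w)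
      (h2 : TComp (fun y => if y = x then some τ1 else Γ y) Φ e2 τ2 m k t2 γ2 w) :
      TComp Γ Φ (.letin x τ1 e1 e2) τ2 n k
        (t2.tsubst x t1) (.and γ1 (γ2.tsubst x t1)) w
  | call (Γ : String → Option Ty) (Φ : String → Option FInfo) (f : String)
      (a : AExp) (fi : FInfo) (ta : TForm) (n : ℕ) (w : ℕ → Bool → ℝ)
      (hf : Φ f = some fi)
      (ha : a.compT Γ fi.argTy = some ta)
      (hw : ∀ i < fi.nflips, ∀ b, w (n + i) b = fi.wf i b) :
      TComp Γ Φ (.call f a) fi.retTy n (n + fi.nflips)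
        ((fi.tf.shift n).tsubst fi.arg ta)
        ((fi.gf.shift n).tsubst fi.arg ta) w

/-- The weighted model count of a formula over the flip variables `0, …, n−1`:
`WMC(φ, w) = Σ_{ω ⊨ φ} Π_{l ∈ ω} w(l)`.  (Program variables, which do not
occur after substitution, are evaluated as `false`.) -/
noncomputable def WMC (n : ℕ) (φ : Form) (w : ℕ → Bool → ℝ) : ℝ :=
  ∑ σ : Fin n → Bool,
    if φ.eval (fun i => if h : i < n then σ ⟨i, h⟩ else false) (fun _ _ => false)
    then ∏ i : Fin n, w i (σ i) else 0

/-- Dice programs: a sequence of non-recursive function definitions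
`fun f(x:τ1):τ2 { e }` followed by a main expression. -/
inductive Prog : Type
  | main : Exp → Prog
  | fdef : String → String → Ty → Ty → Exp → Prog → Prog

/-- The unnormalized semantics of a program relative to a function table `T`:
`⟦• e⟧^T = ⟦e⟧^T` and `⟦func p⟧^T = ⟦p⟧^{T ∪ {name(func) ↦ ⟦func⟧^T}}`,
where `⟦fun f(x:τ1):τ2 { e }⟧(v) = ⟦e[x ↦ v]⟧`. -/
noncomputable def Prog.sem : (String → Val → Val → ℝ) → Prog → Val → ℝ
  | T, .main e => e.sem T
  | T, .fdef f x _ _ body rest =>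
      rest.sem (fun g =>
        if g = f then
          fun varg =>
            (body.substEnv (fun y => if y = x then some varg else none)).sem T
        else T g)

/-- The compilation judgment for programs `Γ, Φ ⊢ p : τ ⤳ (φ̂, γ, w)` (rules
`C-Prog1`, `C-Prog2`, `C-Func`): each function is compiled in order (its body
compiled with the formal argument in scope, over its own local flip variables)
and added to the compiled-function context `Φ`, and finally the closed main
expression is compiled. -/
inductive PComp :
    (String → Option FInfo) → Prog → Ty → TForm → Form → ℕ → (ℕ → Bool → ℝ) → Prop
  | main (Φ : String → Option FInfo) (e : Exp) (τ : Ty) (t : TForm) (γ : Form)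
      (n : ℕ) (w : ℕ → Bool → ℝ)
      (h : TComp (fun _ => none) Φ e τ 0 n t γ w) :
      PComp Φ (.main e) τ t γ n w
  | fdef (Φ : String → Option FInfo) (f x : String) (τ1 τ2 : Ty) (body : Exp)
      (rest : Prog) (τ : Ty) (t : TForm) (γ : Form) (n : ℕ) (w : ℕ → Bool → ℝ)
      (k : ℕ) (tf : TForm) (gf : Form) (wf : ℕ → Bool → ℝ)
      (hbody : TComp (fun y => if y = x then some τ1 else none) Φ body τ2 0 k tf gf wf)
      (hrest : PComp
        (fun g => if g = f then some ⟨x, τ1, τ2, tf, gf, k, wf⟩ else Φ g)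
        rest τ t γ n w) :
      PComp Φ (.fdef f x τ1 τ2 body rest) τ t γ n w

/-! ### Auxiliary machinery -/

abbrev flE : String → List Bool → Bool := fun _ _ => false

/-- Leaf paths of a type. -/
def Ty.paths : Ty → List (List Bool)
  | .bool => [[]]
  | .prod t1 t2 => t1.paths.map (List.cons false) ++ t2.paths.map (List.cons true)

/-- Projection of a value along a path. -/
def Val.proj : Val → List Bool → Option Val
  | v, [] => some v
  | .pair a _, false :: p => a.proj p
  | .pair _ b, true :: p => b.proj p
  | .bool _, _ :: _ => none

theorem Val.mem_vals_iff : ∀ (τ : Ty) (v : Val), v ∈ τ.vals ↔ v.hasTy τ := by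
  intro τ
  induction τ with
  | bool =>
    intro v
    cases v with
    | bool b => cases b <;> simp [Ty.vals, Val.hasTy]
    | pair a b => simp [Ty.vals, Val.hasTy]
  | prod τ1 τ2 ih1 ih2 =>
    intro v
    cases v with
    | bool b => simp [Ty.vals, Val.hasTy]
    | pair a b =>
      simp only [Ty.vals, List.mem_flatMap, List.mem_map, Val.hasTy, Bool.and_eq_true]
      constructor
      · rintro ⟨v1, hv1, v2, hv2, heq⟩
        cases heq
        exact ⟨(ih1 a).1 hv1, (ih2 b).1 hv2⟩
      · rintro ⟨h1, h2⟩
        exact ⟨a, (ih1 a).2 h1, b, (ih2 b).2 h2, rfl⟩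

theorem nodup_pairs (l2 : List Val) (h2 : l2.Nodup) :
    ∀ l1 : List Val, l1.Nodup →
      (l1.flatMap (fun v1 => l2.map (fun v2 => Val.pair v1 v2))).Nodup := by
  intro l1
  induction l1 with
  | nil => intro _; simp
  | cons a t ih =>
    intro h1
    rw [List.flatMap_cons]
    apply List.Nodup.append
    · exact h2.map (fun x y h => by injection h)
    · exact ih (List.Nodup.of_cons h1)
    · intro x hx hx'
      obtain ⟨v2, _, rfl⟩ := List.mem_map.1 hx
      obtain ⟨b, hb, hx'⟩ := List.mem_flatMap.1 hx'
      obtain ⟨v2', _, heq⟩ := List.mem_map.1 hx'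
      injection heq with e1 e2
      subst e1
      exact (List.nodup_cons.1 h1).1 hb

theorem Ty.vals_nodup : ∀ τ : Ty, τ.vals.Nodup := by
  intro τ
  induction τ with
  | bool => simp [Ty.vals]
  | prod τ1 τ2 ih1 ih2 => exact nodup_pairs _ ih2 _ ih1

/-- A tuple of formulas shaped like a type. -/
def TForm.shaped : TForm → Ty → Prop
  | .base _, .bool => True
  | .pair a b, .prod t1 t2 => a.shaped t1 ∧ b.shaped t2
  | _, _ => False

def TForm.substProgT (ρ : String → Val) : TForm → TForm
  | .base φ => .base (φ.substProg ρ)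
  | .pair a b => .pair (a.substProgT ρ) (b.substProgT ρ)

def TForm.evalB (σ : ℕ → Bool) : TForm → Val
  | .base φ => .bool (φ.eval σ flE)
  | .pair a b => .pair (a.evalB σ) (b.evalB σ)

theorem TForm.shaped_substProgT {t : TForm} {τ : Ty} (h : t.shaped τ) (ρ : String → Val) :
    (t.substProgT ρ).shaped τ := by
  induction t generalizing τ with
  | base φ => cases τ <;> simp_all [TForm.shaped, TForm.substProgT]
  | pair a b iha ihb =>
    cases τ <;> simp_all [TForm.shaped, TForm.substProgT]

theorem TForm.evalB_hasTy {t : TForm} {τ : Ty} (h : t.shaped τ) (σ : ℕ → Bool) :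
    (t.evalB σ).hasTy τ := by
  induction t generalizing τ with
  | base φ => cases τ <;> simp_all [TForm.shaped, TForm.evalB, Val.hasTy]
  | pair a b iha ihb => cases τ <;> simp_all [TForm.shaped, TForm.evalB, Val.hasTy]

theorem Val.toForm_shaped : ∀ {v : Val} {τ : Ty}, v.hasTy τ → v.toForm.shaped τ := by
  intro v
  induction v with
  | bool b => intro τ h; cases τ <;> simp_all [Val.hasTy, Val.toForm, TForm.shaped]
  | pair a b iha ihb =>
    intro τ h; cases τ <;> simp_all [Val.hasTy, Val.toForm, TForm.shaped]

theorem Val.toForm_substProgT (ρ : String → Val) : ∀ v : Val, v.toForm.substProgT ρ = v.toForm := by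
  intro v
  induction v with
  | bool b => cases b <;> simp [Val.toForm, TForm.substProgT, Form.substProg]
  | pair a b iha ihb => simp [Val.toForm, TForm.substProgT, iha, ihb]

theorem Val.evalB_toForm (σ : ℕ → Bool) : ∀ v : Val, v.toForm.evalB σ = v := by
  intro v
  induction v with
  | bool b => cases b <;> simp [Val.toForm, TForm.evalB, Form.eval]
  | pair a b iha ihb => simp [Val.toForm, TForm.evalB, iha, ihb]

theorem Val.toForm_lookup_const : ∀ (v : Val) (p : List Bool) (φ : Form),
    v.toForm.lookup p = some φ → φ = .tt ∨ φ = .ff := by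
  intro v
  induction v with
  | bool b =>
    intro p φ h
    cases p with
    | nil =>
      simp [Val.toForm, TForm.lookup] at h
      cases b <;> simp_all
    | cons c p => cases c <;> simp [Val.toForm, TForm.lookup] at h
  | pair a b iha ihb =>
    intro p φ h
    cases p with
    | nil => simp [Val.toForm, TForm.lookup] at h
    | cons c p =>
      cases c
      · exact iha p φ h
      · exact ihb p φ h

theorem toForm_lookup_proj : ∀ (p : List Bool) (v : Val) (b : Bool),
    v.proj p = some (.bool b) →
    v.toForm.lookup p = some (if b then Form.tt else Form.ff) := by
  intro p
  induction p with
  | nil =>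
    intro v b h
    simp [Val.proj] at h
    subst h
    cases b <;> simp [Val.toForm, TForm.lookup]
  | cons c p ih =>
    intro v b h
    cases v with
    | bool b' => simp [Val.proj] at h
    | pair x y =>
      cases c
      · exact ih x b h
      · exact ih y b h

theorem Val.proj_append_false : ∀ (p : List Bool) (v : Val) {a b : Val},
    v.proj p = some (.pair a b) → v.proj (p ++ [false]) = some a := by
  intro p
  induction p with
  | nil =>
    intro v a b h
    simp [Val.proj] at h
    subst h
    simp [Val.proj]
  | cons c p ih =>
    intro v a b h
    cases v with
    | bool b' => simp [Val.proj] at h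
    | pair x y => cases c <;> exact ih _ h

theorem Val.proj_append_true : ∀ (p : List Bool) (v : Val) {a b : Val},
    v.proj p = some (.pair a b) → v.proj (p ++ [true]) = some b := by
  intro p
  induction p with
  | nil =>
    intro v a b h
    simp [Val.proj] at h
    subst h
    simp [Val.proj]
  | cons c p ih =>
    intro v a b h
    cases v with
    | bool b' => simp [Val.proj] at h
    | pair x y => cases c <;> exact ih _ h

/-! ### formVar, okv, fvOK -/

theorem formVar_shaped (x : String) : ∀ (τ : Ty) (p : List Bool), (formVar x τ p).shaped τ := by
  intro τ
  induction τ with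
  | bool => intro p; simp [formVar, TForm.shaped]
  | prod τ1 τ2 ih1 ih2 => intro p; exact ⟨ih1 _, ih2 _⟩

theorem formVar_evalB (σ : ℕ → Bool) (ρ : String → Val) (x : String) :
    ∀ (τ : Ty) (p : List Bool) (u : Val), (ρ x).proj p = some u → u.hasTy τ →
      TForm.evalB σ ((formVar x τ p).substProgT ρ) = u := by
  intro τ
  induction τ with
  | bool =>
    intro p u hp hty
    cases u with
    | pair a b => simp [Val.hasTy] at hty
    | bool b =>
      simp only [formVar, TForm.substProgT, Form.substProg, TForm.evalB]
      rw [toForm_lookup_proj p _ b hp]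
      cases b <;> simp [Form.eval]
  | prod τ1 τ2 ih1 ih2 =>
    intro p u hp hty
    cases u with
    | bool b => simp [Val.hasTy] at hty
    | pair a b =>
      simp only [Val.hasTy, Bool.and_eq_true] at hty
      simp only [formVar, TForm.substProgT, TForm.evalB]
      rw [ih1 _ a (Val.proj_append_false p _ hp) hty.1,
        ih2 _ b (Val.proj_append_true p _ hp) hty.2]

/-- Program-variable validity of a formula w.r.t. a context. -/
def Form.okv (Γ : String → Option Ty) : Form → Prop
  | .pvar y p => ∃ τ, Γ y = some τ ∧ p ∈ τ.paths
  | .not φ => φ.okv Γ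
  | .and φ ψ => φ.okv Γ ∧ ψ.okv Γ
  | .or φ ψ => φ.okv Γ ∧ ψ.okv Γ
  | .iff φ ψ => φ.okv Γ ∧ ψ.okv Γ
  | _ => True

def TForm.okvT (Γ : String → Option Ty) : TForm → Prop
  | .base φ => φ.okv Γ
  | .pair a b => a.okvT Γ ∧ b.okvT Γ

theorem formVar_okv (x : String) {Γ : String → Option Ty} :
    ∀ (τ : Ty) (p : List Bool),
      (∀ q ∈ τ.paths, ∃ τ', Γ x = some τ' ∧ p ++ q ∈ τ'.paths) →
      (formVar x τ p).okvT Γ := by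
  intro τ
  induction τ with
  | bool =>
    intro p h
    obtain ⟨τ', h1, h2⟩ := h [] (by simp [Ty.paths])
    exact ⟨τ', h1, by simpa using h2⟩
  | prod τ1 τ2 ih1 ih2 =>
    intro p h
    constructor
    · apply ih1
      intro q hq
      obtain ⟨τ', h1, h2⟩ := h (false :: q) (by simp only [Ty.paths, List.mem_append, List.mem_map]; exact Or.inl ⟨q, hq, rfl⟩)
      exact ⟨τ', h1, by simpa [List.append_assoc] using h2⟩
    · apply ih2
      intro q hq
      obtain ⟨τ', h1, h2⟩ := h (true :: q) (by simp only [Ty.paths, List.mem_append, List.mem_map]; exact Or.inr ⟨q, hq, rfl⟩)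
      exact ⟨τ', h1, by simpa [List.append_assoc] using h2⟩

/-- Flip variables of a formula lie in `[n, m)`. -/
def Form.fvOK (n m : ℕ) : Form → Prop
  | .fvar i => n ≤ i ∧ i < m
  | .not φ => φ.fvOK n m
  | .and φ ψ => φ.fvOK n m ∧ ψ.fvOK n m
  | .or φ ψ => φ.fvOK n m ∧ ψ.fvOK n m
  | .iff φ ψ => φ.fvOK n m ∧ ψ.fvOK n m
  | _ => True

def TForm.fvOKT (n m : ℕ) : TForm → Prop
  | .base φ => φ.fvOK n m
  | .pair a b => a.fvOKT n m ∧ b.fvOKT n m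

theorem Form.eval_congr {n m : ℕ} {σ σ' : ℕ → Bool} (hag : ∀ i, n ≤ i → i < m → σ i = σ' i) :
    ∀ {φ : Form}, φ.fvOK n m → ∀ r, φ.eval σ r = φ.eval σ' r := by
  intro φ
  induction φ with
  | tt => intro _ r; rfl
  | ff => intro _ r; rfl
  | fvar i => intro h r; simp only [Form.eval]; exact hag i h.1 h.2
  | pvar y p => intro _ r; rfl
  | not φ ih => intro h r; simp [Form.eval, ih h r]
  | and φ ψ ihφ ihψ => intro h r; simp [Form.eval, ihφ h.1 r, ihψ h.2 r]
  | or φ ψ ihφ ihψ => intro h r; simp [Form.eval, ihφ h.1 r, ihψ h.2 r]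
  | iff φ ψ ihφ ihψ => intro h r; simp [Form.eval, ihφ h.1 r, ihψ h.2 r]

theorem TForm.evalB_congr {n m : ℕ} {σ σ' : ℕ → Bool} (hag : ∀ i, n ≤ i → i < m → σ i = σ' i) :
    ∀ {t : TForm}, t.fvOKT n m → t.evalB σ = t.evalB σ' := by
  intro t
  induction t with
  | base φ => intro h; simp [TForm.evalB, Form.eval_congr hag h flE]
  | pair a b iha ihb => intro h; simp [TForm.evalB, iha h.1, ihb h.2]

theorem Form.fvOK_mono {n m n' m' : ℕ} (hn : n' ≤ n) (hm : m ≤ m') :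
    ∀ {φ : Form}, φ.fvOK n m → φ.fvOK n' m' := by
  intro φ
  induction φ with
  | fvar i => intro h; exact ⟨le_trans hn h.1, lt_of_lt_of_le h.2 hm⟩
  | not φ ih => intro h; exact ih h
  | and φ ψ ihφ ihψ => intro h; exact ⟨ihφ h.1, ihψ h.2⟩
  | or φ ψ ihφ ihψ => intro h; exact ⟨ihφ h.1, ihψ h.2⟩
  | iff φ ψ ihφ ihψ => intro h; exact ⟨ihφ h.1, ihψ h.2⟩
  | tt => intro h; trivial
  | ff => intro h; trivial
  | pvar y p => intro h; trivial

theorem TForm.fvOKT_mono {n m n' m' : ℕ} (hn : n' ≤ n) (hm : m ≤ m') :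
    ∀ {t : TForm}, t.fvOKT n m → t.fvOKT n' m' := by
  intro t
  induction t with
  | base φ => exact Form.fvOK_mono hn hm
  | pair a b iha ihb => intro h; exact ⟨iha h.1, ihb h.2⟩

theorem Form.fvOK_getD_toForm (n m : ℕ) (v : Val) (p : List Bool) :
    Form.fvOK n m ((v.toForm.lookup p).getD .ff) := by
  cases h : v.toForm.lookup p with
  | none => trivial
  | some φ =>
    rcases Val.toForm_lookup_const v p φ h with rfl | rfl <;> trivial

theorem Form.fvOK_substProg {n m : ℕ} (ρ : String → Val) :
    ∀ {φ : Form}, φ.fvOK n m → (φ.substProg ρ).fvOK n m := by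
  intro φ
  induction φ with
  | tt => intro _; trivial
  | ff => intro _; trivial
  | fvar i => intro h; exact h
  | pvar y p => intro _; exact Form.fvOK_getD_toForm n m (ρ y) p
  | not φ ih => intro h; exact ih h
  | and φ ψ ihφ ihψ => intro h; exact ⟨ihφ h.1, ihψ h.2⟩
  | or φ ψ ihφ ihψ => intro h; exact ⟨ihφ h.1, ihψ h.2⟩
  | iff φ ψ ihφ ihψ => intro h; exact ⟨ihφ h.1, ihψ h.2⟩

theorem TForm.fvOKT_substProgT {n m : ℕ} (ρ : String → Val) :
    ∀ {t : TForm}, t.fvOKT n m → (t.substProgT ρ).fvOKT n m := by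
  intro t
  induction t with
  | base φ => exact Form.fvOK_substProg ρ
  | pair a b iha ihb => intro h; exact ⟨iha h.1, ihb h.2⟩

theorem TForm.lookup_fvOK {n m : ℕ} :
    ∀ {t : TForm} {p : List Bool} {ψ : Form}, t.fvOKT n m → t.lookup p = some ψ → ψ.fvOK n m := by
  intro t
  induction t with
  | base φ =>
    intro p ψ h hl
    cases p with
    | nil => simp [TForm.lookup] at hl; subst hl; exact h
    | cons c p => simp [TForm.lookup] at hl
  | pair a b iha ihb =>
    intro p ψ h hl
    cases p with
    | nil => simp [TForm.lookup] at hl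
    | cons c p => cases c <;> [exact iha h.1 hl; exact ihb h.2 hl]

theorem TForm.lookup_okv {Γ : String → Option Ty} :
    ∀ {t : TForm} {p : List Bool} {ψ : Form}, t.okvT Γ → t.lookup p = some ψ → ψ.okv Γ := by
  intro t
  induction t with
  | base φ =>
    intro p ψ h hl
    cases p with
    | nil => simp [TForm.lookup] at hl; subst hl; exact h
    | cons c p => simp [TForm.lookup] at hl
  | pair a b iha ihb =>
    intro p ψ h hl
    cases p with
    | nil => simp [TForm.lookup] at hl
    | cons c p => cases c <;> [exact iha h.1 hl; exact ihb h.2 hl]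

theorem TForm.shaped_lookup :
    ∀ {t : TForm} {τ : Ty}, t.shaped τ → ∀ {p : List Bool}, p ∈ τ.paths → ∃ ψ, t.lookup p = some ψ := by
  intro t
  induction t with
  | base φ =>
    intro τ hs p hp
    cases τ with
    | bool => simp [Ty.paths] at hp; subst hp; exact ⟨φ, rfl⟩
    | prod τ1 τ2 => exact absurd hs (by simp [TForm.shaped])
  | pair a b iha ihb =>
    intro τ hs p hp
    cases τ with
    | bool => exact absurd hs (by simp [TForm.shaped])
    | prod τ1 τ2 =>
      simp only [Ty.paths, List.mem_append, List.mem_map] at hp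
      rcases hp with ⟨q, hq, rfl⟩ | ⟨q, hq, rfl⟩
      · exact iha hs.1 hq
      · exact ihb hs.2 hq

theorem formVar_fvOK (x : String) (n m : ℕ) : ∀ (τ : Ty) (p : List Bool), (formVar x τ p).fvOKT n m := by
  intro τ
  induction τ with
  | bool => intro p; trivial
  | prod τ1 τ2 ih1 ih2 => intro p; exact ⟨ih1 _, ih2 _⟩

theorem Val.toForm_fvOK (n m : ℕ) : ∀ v : Val, v.toForm.fvOKT n m := by
  intro v
  induction v with
  | bool b => cases b <;> trivial
  | pair a b iha ihb => exact ⟨iha, ihb⟩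

/-! ### Substitution lemmas -/

theorem Form.substProg_congr {Γ : String → Option Ty} {ρ₁ ρ₂ : String → Val}
    (hag : ∀ y, (∃ τ, Γ y = some τ) → ρ₁ y = ρ₂ y) :
    ∀ {φ : Form}, φ.okv Γ → φ.substProg ρ₁ = φ.substProg ρ₂ := by
  intro φ
  induction φ with
  | tt => intro _; rfl
  | ff => intro _; rfl
  | fvar i => intro _; rfl
  | pvar y p =>
    intro h
    obtain ⟨τ, h1, _⟩ := h
    simp [Form.substProg, hag y ⟨τ, h1⟩]
  | not φ ih => intro h; simp [Form.substProg, ih h]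
  | and φ ψ ihφ ihψ => intro h; simp [Form.substProg, ihφ h.1, ihψ h.2]
  | or φ ψ ihφ ihψ => intro h; simp [Form.substProg, ihφ h.1, ihψ h.2]
  | iff φ ψ ihφ ihψ => intro h; simp [Form.substProg, ihφ h.1, ihψ h.2]

theorem TForm.substProgT_congr {Γ : String → Option Ty} {ρ₁ ρ₂ : String → Val}
    (hag : ∀ y, (∃ τ, Γ y = some τ) → ρ₁ y = ρ₂ y) :
    ∀ {t : TForm}, t.okvT Γ → t.substProgT ρ₁ = t.substProgT ρ₂ := by
  intro t
  induction t with
  | base φ => intro h; simp [TForm.substProgT, Form.substProg_congr hag h]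
  | pair a b iha ihb => intro h; simp [TForm.substProgT, iha h.1, ihb h.2]

theorem Form.substProg_closed {Γ : String → Option Ty} (hΓ : ∀ y, Γ y = none) (ρ : String → Val) :
    ∀ {φ : Form}, φ.okv Γ → φ.substProg ρ = φ := by
  intro φ
  induction φ with
  | tt => intro _; rfl
  | ff => intro _; rfl
  | fvar i => intro _; rfl
  | pvar y p =>
    intro h
    obtain ⟨τ, h1, _⟩ := h
    rw [hΓ y] at h1
    cases h1
  | not φ ih => intro h; simp [Form.substProg, ih h]
  | and φ ψ ihφ ihψ => intro h; simp [Form.substProg, ihφ h.1, ihψ h.2]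
  | or φ ψ ihφ ihψ => intro h; simp [Form.substProg, ihφ h.1, ihψ h.2]
  | iff φ ψ ihφ ihψ => intro h; simp [Form.substProg, ihφ h.1, ihψ h.2]

theorem TForm.substProgT_closed {Γ : String → Option Ty} (hΓ : ∀ y, Γ y = none) (ρ : String → Val) :
    ∀ {t : TForm}, t.okvT Γ → t.substProgT ρ = t := by
  intro t
  induction t with
  | base φ => intro h; simp [TForm.substProgT, Form.substProg_closed hΓ ρ h]
  | pair a b iha ihb => intro h; simp [TForm.substProgT, iha h.1, ihb h.2]

/-! ### shift lemmas -/

theorem Form.shift_getD_toForm (k : ℕ) (v : Val) (p : List Bool) :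
    (((v.toForm.lookup p).getD .ff).shift k) = (v.toForm.lookup p).getD .ff := by
  cases h : v.toForm.lookup p with
  | none => rfl
  | some φ => rcases Val.toForm_lookup_const v p φ h with rfl | rfl <;> rfl

theorem Form.substProg_shift (k : ℕ) (ρ : String → Val) :
    ∀ φ : Form, (φ.shift k).substProg ρ = (φ.substProg ρ).shift k := by
  intro φ
  induction φ with
  | tt => rfl
  | ff => rfl
  | fvar i => rfl
  | pvar y p => simp [Form.shift, Form.substProg, Form.shift_getD_toForm]
  | not φ ih => simp [Form.shift, Form.substProg, ih]
  | and φ ψ ihφ ihψ => simp [Form.shift, Form.substProg, ihφ, ihψ]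
  | or φ ψ ihφ ihψ => simp [Form.shift, Form.substProg, ihφ, ihψ]
  | iff φ ψ ihφ ihψ => simp [Form.shift, Form.substProg, ihφ, ihψ]

theorem TForm.substProgT_shift (k : ℕ) (ρ : String → Val) :
    ∀ t : TForm, (t.shift k).substProgT ρ = (t.substProgT ρ).shift k := by
  intro t
  induction t with
  | base φ => simp [TForm.shift, TForm.substProgT, Form.substProg_shift]
  | pair a b iha ihb => simp [TForm.shift, TForm.substProgT, iha, ihb]

theorem Form.eval_shift (k : ℕ) (σ : ℕ → Bool) (r : String → List Bool → Bool) :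
    ∀ φ : Form, (φ.shift k).eval σ r = φ.eval (fun i => σ (i + k)) r := by
  intro φ
  induction φ with
  | tt => rfl
  | ff => rfl
  | fvar i => rfl
  | pvar y p => rfl
  | not φ ih => simp [Form.shift, Form.eval, ih]
  | and φ ψ ihφ ihψ => simp [Form.shift, Form.eval, ihφ, ihψ]
  | or φ ψ ihφ ihψ => simp [Form.shift, Form.eval, ihφ, ihψ]
  | iff φ ψ ihφ ihψ => simp [Form.shift, Form.eval, ihφ, ihψ]

theorem TForm.evalB_shift (k : ℕ) (σ : ℕ → Bool) :
    ∀ t : TForm, (t.shift k).evalB σ = t.evalB (fun i => σ (i + k)) := by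
  intro t
  induction t with
  | base φ => simp [TForm.shift, TForm.evalB, Form.eval_shift]
  | pair a b iha ihb => simp [TForm.shift, TForm.evalB, iha, ihb]

theorem Form.okv_shift {Γ : String → Option Ty} (k : ℕ) :
    ∀ {φ : Form}, φ.okv Γ → (φ.shift k).okv Γ := by
  intro φ
  induction φ with
  | tt => intro _; trivial
  | ff => intro _; trivial
  | fvar i => intro _; trivial
  | pvar y p => intro h; exact h
  | not φ ih => intro h; exact ih h
  | and φ ψ ihφ ihψ => intro h; exact ⟨ihφ h.1, ihψ h.2⟩
  | or φ ψ ihφ ihψ => intro h; exact ⟨ihφ h.1, ihψ h.2⟩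
  | iff φ ψ ihφ ihψ => intro h; exact ⟨ihφ h.1, ihψ h.2⟩

theorem TForm.okvT_shift {Γ : String → Option Ty} (k : ℕ) :
    ∀ {t : TForm}, t.okvT Γ → (t.shift k).okvT Γ := by
  intro t
  induction t with
  | base φ => exact Form.okv_shift k
  | pair a b iha ihb => intro h; exact ⟨iha h.1, ihb h.2⟩

theorem TForm.shaped_shift (k : ℕ) :
    ∀ {t : TForm} {τ : Ty}, t.shaped τ → (t.shift k).shaped τ := by
  intro t
  induction t with
  | base φ => intro τ h; cases τ <;> simpa [TForm.shift, TForm.shaped] using h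
  | pair a b iha ihb =>
    intro τ h; cases τ with
    | bool => exact absurd h (by simp [TForm.shaped])
    | prod τ1 τ2 => exact ⟨iha h.1, ihb h.2⟩

theorem Form.fvOK_shift {a b k : ℕ} :
    ∀ {φ : Form}, φ.fvOK a b → (φ.shift k).fvOK (a + k) (b + k) := by
  intro φ
  induction φ with
  | tt => intro _; trivial
  | ff => intro _; trivial
  | fvar i => intro h; obtain ⟨h1, h2⟩ := h; exact ⟨by omega, by omega⟩
  | pvar y p => intro _; trivial
  | not φ ih => intro h; exact ih h
  | and φ ψ ihφ ihψ => intro h; exact ⟨ihφ h.1, ihψ h.2⟩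
  | or φ ψ ihφ ihψ => intro h; exact ⟨ihφ h.1, ihψ h.2⟩
  | iff φ ψ ihφ ihψ => intro h; exact ⟨ihφ h.1, ihψ h.2⟩

theorem TForm.fvOKT_shift {a b k : ℕ} :
    ∀ {t : TForm}, t.fvOKT a b → (t.shift k).fvOKT (a + k) (b + k) := by
  intro t
  induction t with
  | base φ => exact Form.fvOK_shift
  | pair a b iha ihb => intro h; exact ⟨iha h.1, ihb h.2⟩

/-! ### tsubst lemmas -/

theorem Form.fvOK_tsubst {n m : ℕ} {x : String} {t1 : TForm} (ht : t1.fvOKT n m) :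
    ∀ {φ : Form}, φ.fvOK n m → (φ.tsubst x t1).fvOK n m := by
  intro φ
  induction φ with
  | tt => intro _; trivial
  | ff => intro _; trivial
  | fvar i => intro h; exact h
  | pvar y p =>
    intro _
    simp only [Form.tsubst]
    split
    · cases hl : t1.lookup p with
      | none => trivial
      | some ψ => simpa [hl] using TForm.lookup_fvOK ht hl
    · trivial
  | not φ ih => intro h; exact ih h
  | and φ ψ ihφ ihψ => intro h; exact ⟨ihφ h.1, ihψ h.2⟩
  | or φ ψ ihφ ihψ => intro h; exact ⟨ihφ h.1, ihψ h.2⟩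
  | iff φ ψ ihφ ihψ => intro h; exact ⟨ihφ h.1, ihψ h.2⟩

theorem TForm.fvOKT_tsubst {n m : ℕ} {x : String} {t1 : TForm} (ht : t1.fvOKT n m) :
    ∀ {t : TForm}, t.fvOKT n m → (t.tsubst x t1).fvOKT n m := by
  intro t
  induction t with
  | base φ => exact Form.fvOK_tsubst ht
  | pair a b iha ihb => intro h; exact ⟨iha h.1, ihb h.2⟩

theorem Form.okv_tsubst {Γ Γ'' : String → Option Ty} {x : String} {τ1 : Ty} {t1 : TForm}
    (hx : Γ'' x = some τ1) (hsh : t1.shaped τ1) (hok : t1.okvT Γ)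
    (hΓ : ∀ y, y ≠ x → ∀ τ', Γ'' y = some τ' → Γ y = some τ') :
    ∀ {φ : Form}, φ.okv Γ'' → (φ.tsubst x t1).okv Γ := by
  intro φ
  induction φ with
  | tt => intro _; trivial
  | ff => intro _; trivial
  | fvar i => intro _; trivial
  | pvar y p =>
    intro h
    obtain ⟨τ, h1, h2⟩ := h
    simp only [Form.tsubst]
    split
    · next heq =>
      subst heq
      rw [hx] at h1
      injection h1 with h1
      subst h1
      obtain ⟨ψ, hψ⟩ := TForm.shaped_lookup hsh h2
      simpa [hψ] using TForm.lookup_okv hok hψ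
    · next hne => exact ⟨τ, hΓ y hne τ h1, h2⟩
  | not φ ih => intro h; exact ih h
  | and φ ψ ihφ ihψ => intro h; exact ⟨ihφ h.1, ihψ h.2⟩
  | or φ ψ ihφ ihψ => intro h; exact ⟨ihφ h.1, ihψ h.2⟩
  | iff φ ψ ihφ ihψ => intro h; exact ⟨ihφ h.1, ihψ h.2⟩

theorem TForm.okvT_tsubst {Γ Γ'' : String → Option Ty} {x : String} {τ1 : Ty} {t1 : TForm}
    (hx : Γ'' x = some τ1) (hsh : t1.shaped τ1) (hok : t1.okvT Γ)
    (hΓ : ∀ y, y ≠ x → ∀ τ', Γ'' y = some τ' → Γ y = some τ') :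
    ∀ {t : TForm}, t.okvT Γ'' → (t.tsubst x t1).okvT Γ := by
  intro t
  induction t with
  | base φ => exact Form.okv_tsubst hx hsh hok hΓ
  | pair a b iha ihb => intro h; exact ⟨iha h.1, ihb h.2⟩

theorem TForm.shaped_tsubst {x : String} {t1 : TForm} :
    ∀ {t : TForm} {τ : Ty}, t.shaped τ → (t.tsubst x t1).shaped τ := by
  intro t
  induction t with
  | base φ => intro τ h; cases τ <;> simpa [TForm.tsubst, TForm.shaped] using h
  | pair a b iha ihb =>
    intro τ h; cases τ with
    | bool => exact absurd h (by simp [TForm.shaped])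
    | prod τ1 τ2 => exact ⟨iha h.1, ihb h.2⟩

/-- key lookup lemma -/
theorem TForm.lookup_evalB_toForm (σ : ℕ → Bool) (ρ : String → Val) :
    ∀ (t : TForm) (p : List Bool) (ψ : Form), t.lookup p = some ψ →
      ((t.substProgT ρ).evalB σ).toForm.lookup p
        = some (if (ψ.substProg ρ).eval σ flE then Form.tt else Form.ff) := by
  intro t
  induction t with
  | base φ =>
    intro p ψ hl
    cases p with
    | nil =>
      simp only [TForm.lookup] at hl
      injection hl with hl
      subst hl
      simp only [TForm.substProgT, TForm.evalB, Val.toForm]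
      cases h : (φ.substProg ρ).eval σ flE <;> simp [TForm.lookup, h]
    | cons c p => simp [TForm.lookup] at hl
  | pair a b iha ihb =>
    intro p ψ hl
    cases p with
    | nil => simp [TForm.lookup] at hl
    | cons c p =>
      cases c
      · simpa [TForm.substProgT, TForm.evalB, Val.toForm, TForm.lookup] using iha p ψ hl
      · simpa [TForm.substProgT, TForm.evalB, Val.toForm, TForm.lookup] using ihb p ψ hl

/-- The central substitution lemma. -/
theorem Form.tsubst_eval {Γ'' : String → Option Ty} {x : String} {τ1 : Ty} {t1 : TForm}
    (hx : Γ'' x = some τ1) (hsh : t1.shaped τ1) (σ : ℕ → Bool) (ρ : String → Val) :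
    ∀ {φ : Form}, φ.okv Γ'' →
      ((φ.tsubst x t1).substProg ρ).eval σ flE =
      (φ.substProg (fun y => if y = x then (t1.substProgT ρ).evalB σ else ρ y)).eval σ flE := by
  intro φ
  induction φ with
  | tt => intro _; rfl
  | ff => intro _; rfl
  | fvar i => intro _; rfl
  | pvar y p =>
    intro h
    obtain ⟨τ, h1, h2⟩ := h
    simp only [Form.tsubst, Form.substProg]
    by_cases hxy : y = x
    · subst hxy
      rw [hx] at h1
      injection h1 with h1
      subst h1
      obtain ⟨ψ, hψ⟩ := TForm.shaped_lookup hsh h2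
      rw [if_pos rfl, if_pos rfl, hψ, TForm.lookup_evalB_toForm σ ρ t1 p ψ hψ]
      simp only [Option.getD_some]
      cases hb : (ψ.substProg ρ).eval σ flE <;> simp [Form.eval, hb]
    · rw [if_neg hxy, if_neg hxy]
      rfl
  | not φ ih => intro h; simp [Form.tsubst, Form.substProg, Form.eval, ih h]
  | and φ ψ ihφ ihψ => intro h; simp [Form.tsubst, Form.substProg, Form.eval, ihφ h.1, ihψ h.2]
  | or φ ψ ihφ ihψ => intro h; simp [Form.tsubst, Form.substProg, Form.eval, ihφ h.1, ihψ h.2]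
  | iff φ ψ ihφ ihψ => intro h; simp [Form.tsubst, Form.substProg, Form.eval, ihφ h.1, ihψ h.2]

theorem TForm.tsubst_evalB {Γ'' : String → Option Ty} {x : String} {τ1 : Ty} {t1 : TForm}
    (hx : Γ'' x = some τ1) (hsh : t1.shaped τ1) (σ : ℕ → Bool) (ρ : String → Val) :
    ∀ {t : TForm}, t.okvT Γ'' →
      ((t.tsubst x t1).substProgT ρ).evalB σ =
      ((t.substProgT (fun y => if y = x then (t1.substProgT ρ).evalB σ else ρ y)).evalB σ) := by
  intro t
  induction t with
  | base φ =>
    intro h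
    simp only [TForm.tsubst, TForm.substProgT, TForm.evalB]
    rw [Form.tsubst_eval hx hsh σ ρ h]
  | pair a b iha ihb => intro h; simp [TForm.tsubst, TForm.substProgT, TForm.evalB, iha h.1, ihb h.2]

/-! ### band / tor lemmas -/

theorem TForm.substProgT_band (ρ : String → Val) (φ : Form) :
    ∀ t : TForm, (t.band φ).substProgT ρ = (t.substProgT ρ).band (φ.substProg ρ) := by
  intro t
  induction t with
  | base ψ => simp [TForm.band, TForm.substProgT, Form.substProg]
  | pair a b iha ihb => simp [TForm.band, TForm.substProgT, iha, ihb]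

theorem TForm.substProgT_tor (ρ : String → Val) :
    ∀ t t' : TForm, (t.tor t').substProgT ρ = (t.substProgT ρ).tor (t'.substProgT ρ) := by
  intro t
  induction t with
  | base ψ =>
    intro t'
    cases t' <;> simp [TForm.tor, TForm.substProgT, Form.substProg]
  | pair a b iha ihb =>
    intro t'
    cases t' <;> simp [TForm.tor, TForm.substProgT, iha, ihb]

theorem TForm.shaped_band {t : TForm} {τ : Ty} (h : t.shaped τ) (φ : Form) :
    (t.band φ).shaped τ := by
  induction t generalizing τ with
  | base ψ => cases τ <;> simpa [TForm.band, TForm.shaped] using h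
  | pair a b iha ihb =>
    cases τ with
    | bool => exact absurd h (by simp [TForm.shaped])
    | prod τ1 τ2 => exact ⟨iha h.1 , ihb h.2⟩

theorem TForm.evalB_tor_band_left : ∀ {t t' : TForm} {τ : Ty}, t.shaped τ → t'.shaped τ →
    ∀ (φ ψ : Form) (σ : ℕ → Bool), φ.eval σ flE = true → ψ.eval σ flE = false →
      ((t.band φ).tor (t'.band ψ)).evalB σ = t.evalB σ := by
  intro t
  induction t with
  | base α =>
    intro t' τ hs hs' φ ψ σ hφ hψ
    cases τ with
    | prod τ1 τ2 => exact absurd hs (by simp [TForm.shaped])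
    | bool =>
      cases t' with
      | pair c d => exact absurd hs' (by simp [TForm.shaped])
      | base β => simp [TForm.band, TForm.tor, TForm.evalB, Form.eval, hφ, hψ]
  | pair a b iha ihb =>
    intro t' τ hs hs' φ ψ σ hφ hψ
    cases τ with
    | bool => exact absurd hs (by simp [TForm.shaped])
    | prod τ1 τ2 =>
      cases t' with
      | base β => exact absurd hs' (by simp [TForm.shaped])
      | pair c d =>
        simp only [TForm.band, TForm.tor, TForm.evalB]
        rw [iha hs.1 hs'.1 φ ψ σ hφ hψ, ihb hs.2 hs'.2 φ ψ σ hφ hψ]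

theorem TForm.evalB_tor_band_right : ∀ {t t' : TForm} {τ : Ty}, t.shaped τ → t'.shaped τ →
    ∀ (φ ψ : Form) (σ : ℕ → Bool), φ.eval σ flE = false → ψ.eval σ flE = true →
      ((t.band φ).tor (t'.band ψ)).evalB σ = t'.evalB σ := by
  intro t
  induction t with
  | base α =>
    intro t' τ hs hs' φ ψ σ hφ hψ
    cases τ with
    | prod τ1 τ2 => exact absurd hs (by simp [TForm.shaped])
    | bool =>
      cases t' with
      | pair c d => exact absurd hs' (by simp [TForm.shaped])
      | base β => simp [TForm.band, TForm.tor, TForm.evalB, Form.eval, hφ, hψ]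
  | pair a b iha ihb =>
    intro t' τ hs hs' φ ψ σ hφ hψ
    cases τ with
    | bool => exact absurd hs (by simp [TForm.shaped])
    | prod τ1 τ2 =>
      cases t' with
      | base β => exact absurd hs' (by simp [TForm.shaped])
      | pair c d =>
        simp only [TForm.band, TForm.tor, TForm.evalB]
        rw [iha hs.1 hs'.1 φ ψ σ hφ hψ, ihb hs.2 hs'.2 φ ψ σ hφ hψ]

theorem TForm.fvOKT_band {n m : ℕ} {t : TForm} {φ : Form} (ht : t.fvOKT n m) (hφ : φ.fvOK n m) :
    (t.band φ).fvOKT n m := by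
  induction t with
  | base ψ => exact ⟨hφ, ht⟩
  | pair a b iha ihb => exact ⟨iha ht.1, ihb ht.2⟩

theorem TForm.fvOKT_tor {n m : ℕ} : ∀ {t t' : TForm}, t.fvOKT n m → t'.fvOKT n m →
    (t.tor t').fvOKT n m := by
  intro t
  induction t with
  | base ψ =>
    intro t' ht ht'
    cases t' with
    | base β => exact ⟨ht, ht'⟩
    | pair c d => exact ht
  | pair a b iha ihb =>
    intro t' ht ht'
    cases t' with
    | base β => exact ht
    | pair c d => exact ⟨iha ht.1 ht'.1, ihb ht.2 ht'.2⟩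

theorem Form.okv_band_aux : True := trivial

theorem TForm.okvT_band {Γ : String → Option Ty} {t : TForm} {φ : Form}
    (ht : t.okvT Γ) (hφ : φ.okv Γ) : (t.band φ).okvT Γ := by
  induction t with
  | base ψ => exact ⟨hφ, ht⟩
  | pair a b iha ihb => exact ⟨iha ht.1, ihb ht.2⟩

theorem TForm.okvT_tor {Γ : String → Option Ty} : ∀ {t t' : TForm}, t.okvT Γ → t'.okvT Γ →
    (t.tor t').okvT Γ := by
  intro t
  induction t with
  | base ψ =>
    intro t' ht ht'
    cases t' with
    | base β => exact ⟨ht, ht'⟩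
    | pair c d => exact ht
  | pair a b iha ihb =>
    intro t' ht ht'
    cases t' with
    | base β => exact ht
    | pair c d => exact ⟨iha ht.1 ht'.1, ihb ht.2 ht'.2⟩

/-! ### tiff -/

theorem tiff_eval (σ : ℕ → Bool) : ∀ (t : TForm) (u : Val),
    (t.tiff u.toForm).eval σ flE = decide (t.evalB σ = u) := by
  intro t
  induction t with
  | base φ =>
    intro u
    cases u with
    | bool b =>
      cases b <;> cases h : φ.eval σ flE <;>
        simp [Val.toForm, TForm.tiff, Form.eval, TForm.evalB, h]
    | pair a b => simp [Val.toForm, TForm.tiff, Form.eval, TForm.evalB]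
  | pair a b iha ihb =>
    intro u
    cases u with
    | bool c => simp [Val.toForm, TForm.tiff, Form.eval, TForm.evalB]
    | pair c d =>
      simp [Val.toForm, TForm.tiff, Form.eval, TForm.evalB, iha, ihb]

/-! ### SSum: weighted sums over assignments of a range of flip variables -/

noncomputable def SSum (n m : ℕ) (w : ℕ → Bool → ℝ) (c : (ℕ → Bool) → Bool) : ℝ :=
  ∑ s ∈ (Finset.Ico n m).powerset,
    if c (fun i => decide (i ∈ s)) then ∏ i ∈ Finset.Ico n m, w i (decide (i ∈ s)) else 0

theorem SSum_congr {n m : ℕ} {w : ℕ → Bool → ℝ} {c c' : (ℕ → Bool) → Bool}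
    (h : ∀ σ, c σ = c' σ) : SSum n m w c = SSum n m w c' := by
  unfold SSum
  exact Finset.sum_congr rfl (fun s _ => by rw [h])

theorem SSum_nil (n : ℕ) (w : ℕ → Bool → ℝ) (c : (ℕ → Bool) → Bool) :
    SSum n n w c = if c (fun _ => false) then 1 else 0 := by
  unfold SSum
  rw [Finset.Ico_self, Finset.powerset_empty, Finset.sum_singleton]
  have h : (fun i => decide (i ∈ (∅ : Finset ℕ))) = (fun _ => false) := by
    funext i; simp
  rw [h]
  simp

theorem SSum_single (n : ℕ) (w : ℕ → Bool → ℝ) (c : (ℕ → Bool) → Bool) :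
    SSum n (n + 1) w c =
      (if c (fun _ => false) then w n false else 0)
        + (if c (fun i => decide (i = n)) then w n true else 0) := by
  unfold SSum
  rw [Nat.Ico_succ_singleton, show ({n} : Finset ℕ).powerset = {∅, {n}} from rfl]
  rw [Finset.sum_pair (Ne.symm (Finset.singleton_ne_empty n))]
  have h1 : (fun i => decide (i ∈ (∅ : Finset ℕ))) = (fun _ => false) := by funext i; simp
  have h2 : (fun i => decide (i ∈ ({n} : Finset ℕ))) = (fun i => decide (i = n)) := by
    funext i; simp
  rw [h1, h2]
  simp

theorem SSum_true (n m : ℕ) (w : ℕ → Bool → ℝ)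
    (hw : ∀ i, n ≤ i → i < m → w i true + w i false = 1) :
    SSum n m w (fun _ => true) = 1 := by
  unfold SSum
  simp only [if_true]
  rw [Finset.sum_congr rfl (fun s hs => ?_), ← Finset.prod_add]
  · exact Finset.prod_eq_one (fun i hi => hw i (Finset.mem_Ico.1 hi).1 (Finset.mem_Ico.1 hi).2)
  · rw [Finset.mem_powerset] at hs
    rw [← Finset.union_sdiff_of_subset hs, Finset.prod_union Finset.disjoint_sdiff]
    congr 1
    · exact Finset.prod_congr rfl (fun i hi => by simp [hi])
    · refine Finset.prod_congr (by rw [Finset.union_sdiff_of_subset hs]) (fun i hi => ?_)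
      have : i ∉ s := (Finset.mem_sdiff.1 hi).2
      simp [this]

theorem SSum_split (n m k : ℕ) (hnm : n ≤ m) (hmk : m ≤ k) (w : ℕ → Bool → ℝ)
    (c1 c2 : (ℕ → Bool) → Bool)
    (h1 : ∀ σ σ', (∀ i, n ≤ i → i < m → σ i = σ' i) → c1 σ = c1 σ')
    (h2 : ∀ σ σ', (∀ i, m ≤ i → i < k → σ i = σ' i) → c2 σ = c2 σ') :
    SSum n k w (fun σ => c1 σ && c2 σ) = SSum n m w c1 * SSum m k w c2 := by
  have d : Disjoint (Finset.Ico n m) (Finset.Ico m k) := Finset.Ico_disjoint_Ico_consecutive n m k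
  unfold SSum
  rw [Finset.sum_mul_sum]
  rw [← Finset.sum_product']
  refine Finset.sum_nbij' (fun s => (s ∩ Finset.Ico n m, s ∩ Finset.Ico m k))
    (fun p => p.1 ∪ p.2) ?_ ?_ ?_ ?_ ?_
  · intro s hs
    simp only [Finset.mem_product, Finset.mem_powerset]
    exact ⟨Finset.inter_subset_right, Finset.inter_subset_right⟩
  · intro p hp
    simp only [Finset.mem_product, Finset.mem_powerset] at hp
    rw [Finset.mem_powerset, ← Finset.Ico_union_Ico_eq_Ico hnm hmk]
    exact Finset.union_subset_union hp.1 hp.2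
  · intro s hs
    show s ∩ Finset.Ico n m ∪ s ∩ Finset.Ico m k = s
    rw [Finset.mem_powerset] at hs
    rw [← Finset.inter_union_distrib_left, Finset.Ico_union_Ico_eq_Ico hnm hmk]
    exact Finset.inter_eq_left.2 hs
  · intro p hp
    simp only [Finset.mem_product, Finset.mem_powerset] at hp
    show ((p.1 ∪ p.2) ∩ Finset.Ico n m, (p.1 ∪ p.2) ∩ Finset.Ico m k) = p
    have e1 : (p.1 ∪ p.2) ∩ Finset.Ico n m = p.1 := by
      ext a
      constructor
      · intro ha
        have h1' := Finset.mem_inter.1 ha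
        rcases Finset.mem_union.1 h1'.1 with h | h
        · exact h
        · have hb1 := Finset.mem_Ico.1 (hp.2 h)
          have hb2 := Finset.mem_Ico.1 h1'.2
          omega
      · intro ha
        exact Finset.mem_inter.2 ⟨Finset.mem_union_left _ ha, hp.1 ha⟩
    have e2 : (p.1 ∪ p.2) ∩ Finset.Ico m k = p.2 := by
      ext a
      constructor
      · intro ha
        have h1' := Finset.mem_inter.1 ha
        rcases Finset.mem_union.1 h1'.1 with h | h
        · have hb1 := Finset.mem_Ico.1 (hp.1 h)
          have hb2 := Finset.mem_Ico.1 h1'.2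
          omega
        · exact h
      · intro ha
        exact Finset.mem_inter.2 ⟨Finset.mem_union_right _ ha, hp.2 ha⟩
    rw [e1, e2]
  · intro s hs
    dsimp only
    rw [Finset.mem_powerset] at hs
    have hc1 : c1 (fun i => decide (i ∈ s)) = c1 (fun i => decide (i ∈ s ∩ Finset.Ico n m)) := by
      apply h1
      intro i hni him
      have : i ∈ s ↔ i ∈ s ∩ Finset.Ico n m := by
        rw [Finset.mem_inter, Finset.mem_Ico]
        constructor
        · intro h; exact ⟨h, hni, him⟩
        · intro h; exact h.1
      exact decide_eq_decide.mpr this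
    have hc2 : c2 (fun i => decide (i ∈ s)) = c2 (fun i => decide (i ∈ s ∩ Finset.Ico m k)) := by
      apply h2
      intro i hmi hik
      have : i ∈ s ↔ i ∈ s ∩ Finset.Ico m k := by
        rw [Finset.mem_inter, Finset.mem_Ico]
        constructor
        · intro h; exact ⟨h, hmi, hik⟩
        · intro h; exact h.1
      exact decide_eq_decide.mpr this
    have hprod : (∏ i ∈ Finset.Ico n k, w i (decide (i ∈ s)))
        = (∏ i ∈ Finset.Ico n m, w i (decide (i ∈ s ∩ Finset.Ico n m)))
          * ∏ i ∈ Finset.Ico m k, w i (decide (i ∈ s ∩ Finset.Ico m k)) := by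
      rw [← Finset.Ico_union_Ico_eq_Ico hnm hmk, Finset.prod_union d]
      congr 1
      · refine Finset.prod_congr rfl (fun i hi => ?_)
        congr 1
        exact decide_eq_decide.mpr (by rw [Finset.mem_inter]; exact ⟨fun h => ⟨h, hi⟩, fun h => h.1⟩)
      · refine Finset.prod_congr rfl (fun i hi => ?_)
        congr 1
        exact decide_eq_decide.mpr (by rw [Finset.mem_inter]; exact ⟨fun h => ⟨h, hi⟩, fun h => h.1⟩)
    beta_reduce
    rw [hc1, hc2, hprod]
    have hgen : ∀ (p q : Bool) (x y : ℝ),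
        (if (p && q) = true then x * y else 0) = (if p = true then x else 0) * (if q = true then y else 0) := by
      intro p q x y
      cases p <;> cases q <;> simp
    exact hgen _ _ _ _

theorem SSum_shift (n K : ℕ) (w w' : ℕ → Bool → ℝ)
    (hw : ∀ i, i < K → ∀ b, w (n + i) b = w' i b)
    (c c' : (ℕ → Bool) → Bool) (hc : ∀ σ, c σ = c' (fun i => σ (i + n))) :
    SSum n (n + K) w c = SSum 0 K w' c' := by
  have himg : Finset.Ico n (n + K) = (Finset.Ico 0 K).image (fun a => a + n) := by
    ext a
    simp only [Finset.mem_Ico, Finset.mem_image]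
    constructor
    · intro h; exact ⟨a - n, by omega, by omega⟩
    · rintro ⟨b, hb, rfl⟩; omega
  unfold SSum
  refine Finset.sum_nbij' (fun s => s.image (fun a => a - n)) (fun s => s.image (fun a => a + n))
    ?_ ?_ ?_ ?_ ?_
  · intro s hs
    rw [Finset.mem_powerset] at hs ⊢
    intro x hx
    obtain ⟨a, ha, rfl⟩ := Finset.mem_image.1 hx
    have := Finset.mem_Ico.1 (hs ha)
    exact Finset.mem_Ico.2 (by omega)
  · intro s hs
    rw [Finset.mem_powerset] at hs ⊢
    intro x hx
    obtain ⟨a, ha, rfl⟩ := Finset.mem_image.1 hx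
    have := Finset.mem_Ico.1 (hs ha)
    exact Finset.mem_Ico.2 (by omega)
  · intro s hs
    rw [Finset.mem_powerset] at hs
    show (s.image (fun a => a - n)).image (fun a => a + n) = s
    ext a
    rw [Finset.mem_image]
    constructor
    · rintro ⟨b, hb, rfl⟩
      obtain ⟨cc, hcc, rfl⟩ := Finset.mem_image.1 hb
      have := Finset.mem_Ico.1 (hs hcc)
      have hcq : cc - n + n = cc := by omega
      rw [hcq]
      exact hcc
    · intro ha
      have := Finset.mem_Ico.1 (hs ha)
      exact ⟨a - n, Finset.mem_image.2 ⟨a, ha, rfl⟩, by omega⟩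
  · intro s hs
    rw [Finset.mem_powerset] at hs
    show (s.image (fun a => a + n)).image (fun a => a - n) = s
    ext a
    rw [Finset.mem_image]
    constructor
    · rintro ⟨b, hb, rfl⟩
      obtain ⟨cc, hcc, rfl⟩ := Finset.mem_image.1 hb
      have hcq : cc + n - n = cc := by omega
      rw [hcq]
      exact hcc
    · intro ha
      exact ⟨a + n, Finset.mem_image.2 ⟨a, ha, rfl⟩, by omega⟩
  · intro s hs
    rw [Finset.mem_powerset] at hs
    have hmemiff : ∀ i, (i ∈ s.image (fun a => a - n)) ↔ i + n ∈ s := by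
      intro i
      rw [Finset.mem_image]
      constructor
      · rintro ⟨b, hb, rfl⟩
        have := Finset.mem_Ico.1 (hs hb)
        have hbq : b - n + n = b := by omega
        rw [hbq]
        exact hb
      · intro h
        exact ⟨i + n, h, by omega⟩
    have hcond : c (fun i => decide (i ∈ s)) = c' (fun i => decide (i ∈ s.image (fun a => a - n))) := by
      rw [hc]
      congr 1
      funext i
      exact (decide_eq_decide.mpr (hmemiff i)).symm
    have hprod : (∏ i ∈ Finset.Ico n (n + K), w i (decide (i ∈ s)))
        = ∏ i ∈ Finset.Ico 0 K, w' i (decide (i ∈ s.image (fun a => a - n))) := by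
      rw [himg, Finset.prod_image (fun x _ y _ h => by omega)]
      refine Finset.prod_congr rfl (fun i hi => ?_)
      have hik := (Finset.mem_Ico.1 hi).2
      rw [decide_eq_decide.mpr (hmemiff i)]
      have hres := hw i hik (decide (i + n ∈ s))
      rw [Nat.add_comm n i] at hres
      exact hres
    rw [hcond, hprod]
theorem list_sum_comm {α β : Type} (l : List α) (s : Finset β) (f : α → β → ℝ) :
    (l.map (fun a => ∑ b ∈ s, f a b)).sum = ∑ b ∈ s, (l.map (fun a => f a b)).sum := by
  induction l with
  | nil => simp
  | cons a t ih => simp [ih, Finset.sum_add_distrib]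

theorem list_step (l : List Val) (hnd : l.Nodup) (u : Val) (hu : u ∈ l)
    (b : Bool) (q : Val → Bool) (W : ℝ) :
    (l.map (fun v' => if (decide (u = v') && b) && q v' then W else 0)).sum
      = if b && q u then W else 0 := by
  induction l with
  | nil => cases hu
  | cons a t ih =>
    rw [List.map_cons, List.sum_cons]
    rcases List.mem_cons.1 hu with rfl | hu'
    · have hz : (t.map (fun v' => if (decide (u = v') && b) && q v' then W else 0)).sum = 0 := by
        apply List.sum_eq_zero
        intro x hx
        obtain ⟨v', hv', rfl⟩ := List.mem_map.1 hx
        have : u ≠ v' := fun h => (List.nodup_cons.1 hnd).1 (h ▸ hv')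
        simp [this]
      rw [hz]
      simp
    · have hne : u ≠ a := fun h => (List.nodup_cons.1 hnd).1 (h ▸ hu')
      rw [ih (List.nodup_cons.1 hnd).2 hu']
      simp [hne]

/-! ### WMC as an SSum -/

theorem WMC_eq_SSum (n : ℕ) (φ : Form) (w : ℕ → Bool → ℝ) :
    WMC n φ w = SSum 0 n w (fun σ => φ.eval σ flE) := by
  unfold WMC SSum
  refine Finset.sum_nbij' (fun σ => (Finset.range n).filter
      (fun i => if h : i < n then σ ⟨i, h⟩ else false))
    (fun s => fun i : Fin n => decide (i.1 ∈ s)) ?_ ?_ ?_ ?_ ?_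
  · intro σ _
    rw [Finset.mem_powerset, ← Finset.range_eq_Ico]
    exact Finset.filter_subset _ _
  · intro s _
    exact Finset.mem_univ _
  · intro σ _
    funext i
    simp [Finset.mem_filter, i.2]
  · intro s hs
    rw [Finset.mem_powerset, ← Finset.range_eq_Ico] at hs
    ext a
    simp only [Finset.mem_filter, Finset.mem_range]
    constructor
    · rintro ⟨ha, hb⟩
      rw [dif_pos ha] at hb
      simpa using hb
    · intro ha
      have han : a < n := Finset.mem_range.1 (hs ha)
      refine ⟨han, ?_⟩
      rw [dif_pos han]
      simpa using ha
  · intro σ _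
    have hass : (fun i => if h : i < n then σ ⟨i, h⟩ else false)
        = (fun i => decide (i ∈ (Finset.range n).filter
            (fun i => if h : i < n then σ ⟨i, h⟩ else false))) := by
      funext i
      by_cases h : i < n
      · simp [Finset.mem_filter, h]
      · simp [Finset.mem_filter, h]
    have hprod : (∏ i : Fin n, w i (σ i))
        = ∏ i ∈ Finset.Ico 0 n, w i (decide (i ∈ (Finset.range n).filter
            (fun i => if h : i < n then σ ⟨i, h⟩ else false))) := by
      rw [← Finset.range_eq_Ico]
      rw [← Fin.prod_univ_eq_prod_range (fun i => w i (decide (i ∈ (Finset.range n).filter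
            (fun i => if h : i < n then σ ⟨i, h⟩ else false))))]
      refine Finset.prod_congr rfl (fun i _ => ?_)
      congr 1
      simp [Finset.mem_filter, i.2]
    rw [← hass, hprod]

/-! ### The main condition -/

def COND (t : TForm) (γ : Form) (ρ : String → Val) (v : Val) : (ℕ → Bool) → Bool :=
  fun σ => decide ((t.substProgT ρ).evalB σ = v) && (γ.substProg ρ).eval σ flE

theorem COND_congr {t : TForm} {γ : Form} {n m : ℕ} (ht : t.fvOKT n m) (hγ : γ.fvOK n m)
    (ρ : String → Val) (v : Val) :
    ∀ σ σ', (∀ i, n ≤ i → i < m → σ i = σ' i) → COND t γ ρ v σ = COND t γ ρ v σ' := by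
  intro σ σ' hag
  unfold COND
  rw [TForm.evalB_congr hag (TForm.fvOKT_substProgT ρ ht),
    Form.eval_congr hag (Form.fvOK_substProg ρ hγ) flE]

/-! ### Atoms -/

theorem compT_inv {Γ : String → Option Ty} {a : AExp} {τ : Ty} {ta : TForm}
    (h : a.compT Γ τ = some ta) :
    ta.shaped τ ∧ ta.okvT Γ ∧ ∀ n m, ta.fvOKT n m := by
  cases a with
  | var x =>
    rw [AExp.compT] at h
    split at h
    · next hx =>
      injection h with h
      subst h
      refine ⟨formVar_shaped x τ [], ?_, fun n m => formVar_fvOK x n m τ []⟩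
      exact formVar_okv x τ [] (fun q hq => ⟨τ, hx, by simpa using hq⟩)
    · cases h
  | val u =>
    rw [AExp.compT] at h
    split at h
    · next hu =>
      injection h with h
      subst h
      exact ⟨Val.toForm_shaped hu, by
        clear hu
        induction u with
        | bool b => cases b <;> trivial
        | pair a b iha ihb => exact ⟨iha, ihb⟩,
        fun n m => Val.toForm_fvOK n m u⟩
    · cases h

theorem atom_correct {Γ : String → Option Ty} {a : AExp} {τ : Ty} {ta : TForm}
    (h : a.compT Γ τ = some ta) (ρ : String → Val)
    (hρ : ∀ x τx, Γ x = some τx → (ρ x).hasTy τx) :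
    ∃ u : Val, a.substEnv (fun x => some (ρ x)) = .val u ∧ u.hasTy τ ∧
      ∀ σ, (ta.substProgT ρ).evalB σ = u := by
  cases a with
  | var x =>
    rw [AExp.compT] at h
    split at h
    · next hx =>
      injection h with h
      subst h
      refine ⟨ρ x, by simp [AExp.substEnv], hρ x τ hx, fun σ => ?_⟩
      exact formVar_evalB σ ρ x τ [] (ρ x) (by simp [Val.proj]) (hρ x τ hx)
    · cases h
  | val u =>
    rw [AExp.compT] at h
    split at h
    · next hu =>
      injection h with h
      subst h
      exact ⟨u, by simp [AExp.substEnv], hu, fun σ => by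
        rw [Val.toForm_substProgT, Val.evalB_toForm]⟩
    · cases h

/-! ### substEnv lemmas -/

theorem AExp.substEnv_none : ∀ a : AExp, a.substEnv (fun _ => none) = a := by
  intro a; cases a <;> simp [AExp.substEnv]

theorem Exp.substEnv_none : ∀ e : Exp, e.substEnv (fun _ => none) = e := by
  intro e
  induction e with
  | atom a => simp [Exp.substEnv, AExp.substEnv_none]
  | fst a => simp [Exp.substEnv, AExp.substEnv_none]
  | snd a => simp [Exp.substEnv, AExp.substEnv_none]
  | pair a1 a2 => simp [Exp.substEnv, AExp.substEnv_none]
  | letin x τ e1 e2 ih1 ih2 =>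
    simp only [Exp.substEnv, ih1]
    have : (fun y => if y = x then none else (none : Option Val)) = (fun _ => none) := by
      funext y; simp
    rw [this, ih2]
  | flip θ => simp [Exp.substEnv]
  | ite a e1 e2 ih1 ih2 => simp [Exp.substEnv, AExp.substEnv_none, ih1, ih2]
  | obs a => simp [Exp.substEnv, AExp.substEnv_none]
  | call f a => simp [Exp.substEnv, AExp.substEnv_none]

theorem AExp.substEnv_substEnv (ρ₁ ρ₂ : String → Option Val) : ∀ a : AExp,
    (a.substEnv ρ₁).substEnv ρ₂ = a.substEnv (fun y => (ρ₁ y).elim (ρ₂ y) some) := by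
  intro a
  cases a with
  | val v => simp [AExp.substEnv]
  | var y =>
    cases h : ρ₁ y with
    | none => simp [AExp.substEnv, h]
    | some v => simp [AExp.substEnv, h]

theorem Exp.substEnv_substEnv : ∀ (e : Exp) (ρ₁ ρ₂ : String → Option Val),
    (e.substEnv ρ₁).substEnv ρ₂ = e.substEnv (fun y => (ρ₁ y).elim (ρ₂ y) some) := by
  intro e
  induction e with
  | atom a => intro ρ₁ ρ₂; simp [Exp.substEnv, AExp.substEnv_substEnv]
  | fst a => intro ρ₁ ρ₂; simp [Exp.substEnv, AExp.substEnv_substEnv]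
  | snd a => intro ρ₁ ρ₂; simp [Exp.substEnv, AExp.substEnv_substEnv]
  | pair a1 a2 => intro ρ₁ ρ₂; simp [Exp.substEnv, AExp.substEnv_substEnv]
  | letin x τ e1 e2 ih1 ih2 =>
    intro ρ₁ ρ₂
    simp only [Exp.substEnv, ih1, ih2]
    have henv : (fun y => (if y = x then none else ρ₁ y).elim (if y = x then none else ρ₂ y) some)
        = (fun y => if y = x then none else (ρ₁ y).elim (ρ₂ y) some) := by
      funext y
      by_cases h : y = x <;> simp [h]
    rw [henv]
  | flip θ => intro ρ₁ ρ₂; simp [Exp.substEnv]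
  | ite a e1 e2 ih1 ih2 => intro ρ₁ ρ₂; simp [Exp.substEnv, AExp.substEnv_substEnv, ih1, ih2]
  | obs a => intro ρ₁ ρ₂; simp [Exp.substEnv, AExp.substEnv_substEnv]
  | call f a => intro ρ₁ ρ₂; simp [Exp.substEnv, AExp.substEnv_substEnv]

/-! ### function-context invariants -/

def GammaF (fi : FInfo) : String → Option Ty := fun y => if y = fi.arg then some fi.argTy else none

def FIOK (fi : FInfo) : Prop :=
  fi.tf.shaped fi.retTy ∧ fi.tf.okvT (GammaF fi) ∧ fi.gf.okv (GammaF fi) ∧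
  fi.tf.fvOKT 0 fi.nflips ∧ fi.gf.fvOK 0 fi.nflips ∧
  (∀ i, i < fi.nflips → fi.wf i true + fi.wf i false = 1)

def PhiOK (Φ : String → Option FInfo) : Prop := ∀ f fi, Φ f = some fi → FIOK fi

def FTOK (Φ : String → Option FInfo) (T : String → Val → Val → ℝ) : Prop :=
  ∀ f fi, Φ f = some fi → ∀ u : Val, u.hasTy fi.argTy → ∀ v : Val, v.hasTy fi.retTy →
    T f u v = SSum 0 fi.nflips fi.wf (COND fi.tf fi.gf (fun _ => u) v)

/-! ### free variables of compiled expressions -/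

theorem compT_substEnv_congr {Γ : String → Option Ty} {a : AExp} {τ : Ty} {ta : TForm}
    (h : a.compT Γ τ = some ta) {ρ₁ ρ₂ : String → Option Val}
    (hag : ∀ x, Γ x ≠ none → ρ₁ x = ρ₂ x) : a.substEnv ρ₁ = a.substEnv ρ₂ := by
  cases a with
  | val u => simp [AExp.substEnv]
  | var x =>
    rw [AExp.compT] at h
    split at h
    · next hx =>
      have : ρ₁ x = ρ₂ x := hag x (by simp [hx])
      simp [AExp.substEnv, this]
    · cases h

theorem tcomp_substEnv_congr {Γ : String → Option Ty} {Φ : String → Option FInfo} {e : Exp}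
    {τ : Ty} {n m : ℕ} {t : TForm} {γ : Form} {w : ℕ → Bool → ℝ}
    (h : TComp Γ Φ e τ n m t γ w) :
    ∀ ρ₁ ρ₂ : String → Option Val, (∀ x, Γ x ≠ none → ρ₁ x = ρ₂ x) →
      e.substEnv ρ₁ = e.substEnv ρ₂ := by
  induction h with
  | atom Γ Φ a τ t n w h =>
    intro ρ₁ ρ₂ hag
    simp [Exp.substEnv, compT_substEnv_congr h hag]
  | fst Γ Φ a τ1 τ2 t1 t2 n w h =>
    intro ρ₁ ρ₂ hag
    simp [Exp.substEnv, compT_substEnv_congr h hag]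
  | snd Γ Φ a τ1 τ2 t1 t2 n w h =>
    intro ρ₁ ρ₂ hag
    simp [Exp.substEnv, compT_substEnv_congr h hag]
  | pair Γ Φ a1 a2 τ1 τ2 t1 t2 n w h1 h2 =>
    intro ρ₁ ρ₂ hag
    simp [Exp.substEnv, compT_substEnv_congr h1 hag, compT_substEnv_congr h2 hag]
  | flip Γ Φ θ n w h0 h1 hwt hwf =>
    intro ρ₁ ρ₂ hag
    simp [Exp.substEnv]
  | obs Γ Φ a φa n w h =>
    intro ρ₁ ρ₂ hag
    simp [Exp.substEnv, compT_substEnv_congr h hag]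
  | ite Γ Φ a eT eE τ φg tT tE γT γE n m k w hg hT hE ihT ihE =>
    intro ρ₁ ρ₂ hag
    simp [Exp.substEnv, compT_substEnv_congr hg hag, ihT ρ₁ ρ₂ hag, ihE ρ₁ ρ₂ hag]
  | letin Γ Φ x τ1 τ2 e1 e2 t1 t2 γ1 γ2 n m k w h1 h2 ih1 ih2 =>
    intro ρ₁ ρ₂ hag
    simp only [Exp.substEnv, ih1 ρ₁ ρ₂ hag]
    congr 1
    apply ih2
    intro y hy
    by_cases hxy : y = x
    · simp [hxy]
    · simp only [hxy, if_false]
      apply hag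
      simpa [hxy] using hy
  | call Γ Φ f a fi ta n w hf ha hw =>
    intro ρ₁ ρ₂ hag
    simp [Exp.substEnv, compT_substEnv_congr ha hag]

/-! ### Invariants of compilation -/

theorem TForm.shaped_tor : ∀ {t t' : TForm} {τ : Ty}, t.shaped τ → t'.shaped τ → (t.tor t').shaped τ := by
  intro t
  induction t with
  | base φ =>
    intro t' τ hs hs'
    cases τ with
    | prod τ1 τ2 => exact absurd hs (by simp [TForm.shaped])
    | bool =>
      cases t' with
      | base β => trivial
      | pair c d => exact absurd hs' (by simp [TForm.shaped])
  | pair a b iha ihb =>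
    intro t' τ hs hs'
    cases τ with
    | bool => exact absurd hs (by simp [TForm.shaped])
    | prod τ1 τ2 =>
      cases t' with
      | base β => exact absurd hs' (by simp [TForm.shaped])
      | pair c d => exact ⟨iha hs.1 hs'.1, ihb hs.2 hs'.2⟩

theorem tcomp_inv {Γ : String → Option Ty} {Φ : String → Option FInfo} {e : Exp}
    {τ : Ty} {n m : ℕ} {t : TForm} {γ : Form} {w : ℕ → Bool → ℝ}
    (h : TComp Γ Φ e τ n m t γ w) (hΦ : PhiOK Φ) :
    n ≤ m ∧ t.shaped τ ∧ t.okvT Γ ∧ γ.okv Γ ∧ t.fvOKT n m ∧ γ.fvOK n m ∧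
      (∀ i, n ≤ i → i < m → w i true + w i false = 1) := by
  induction h with
  | atom Γ Φ a τ t n w h =>
    obtain ⟨hs, ho, hf⟩ := compT_inv h
    exact ⟨le_refl n, hs, ho, trivial, hf n n, trivial, fun i h1 h2 => by omega⟩
  | fst Γ Φ a τ1 τ2 t1 t2 n w h =>
    obtain ⟨hs, ho, hf⟩ := compT_inv h
    exact ⟨le_refl n, hs.1, ho.1, trivial, (hf n n).1, trivial, fun i h1 h2 => by omega⟩
  | snd Γ Φ a τ1 τ2 t1 t2 n w h =>
    obtain ⟨hs, ho, hf⟩ := compT_inv h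
    exact ⟨le_refl n, hs.2, ho.2, trivial, (hf n n).2, trivial, fun i h1 h2 => by omega⟩
  | pair Γ Φ a1 a2 τ1 τ2 t1 t2 n w h1 h2 =>
    obtain ⟨hs1, ho1, hf1⟩ := compT_inv h1
    obtain ⟨hs2, ho2, hf2⟩ := compT_inv h2
    exact ⟨le_refl n, ⟨hs1, hs2⟩, ⟨ho1, ho2⟩, trivial, ⟨hf1 n n, hf2 n n⟩, trivial,
      fun i hh1 hh2 => by omega⟩
  | flip Γ Φ θ n w h0 h1 hwt hwf =>
    refine ⟨Nat.le_succ n, trivial, trivial, trivial, ⟨le_refl n, Nat.lt_succ_self n⟩, trivial,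
      fun i hh1 hh2 => ?_⟩
    have : i = n := by omega
    subst this
    rw [hwt, hwf]
    ring
  | obs Γ Φ a φa n w h =>
    obtain ⟨hs, ho, hf⟩ := compT_inv h
    exact ⟨le_refl n, trivial, trivial, ho, trivial, hf n n, fun i h1 h2 => by omega⟩
  | ite Γ Φ a eT eE τ φg tT tE γT γE n m k w hg hT hE ihT ihE =>
    obtain ⟨hsg, hog, hfg⟩ := compT_inv hg
    obtain ⟨hle1, hs1, ho1, hγo1, hf1, hγf1, hw1⟩ := ihT hΦ
    obtain ⟨hle2, hs2, ho2, hγo2, hf2, hγf2, hw2⟩ := ihE hΦ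
    refine ⟨le_trans hle1 hle2,
      TForm.shaped_tor (TForm.shaped_band hs1 φg) (TForm.shaped_band hs2 (.not φg)),
      TForm.okvT_tor (TForm.okvT_band ho1 hog) (TForm.okvT_band ho2 hog),
      ⟨⟨hog, hγo1⟩, hog, hγo2⟩,
      TForm.fvOKT_tor
        (TForm.fvOKT_band (TForm.fvOKT_mono (le_refl n) hle2 hf1) (hfg n k))
        (TForm.fvOKT_band (TForm.fvOKT_mono hle1 (le_refl k) hf2) ((hfg n k) : _)),
      ⟨⟨hfg n k, Form.fvOK_mono (le_refl n) hle2 hγf1⟩, hfg n k, Form.fvOK_mono hle1 (le_refl k) hγf2⟩,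
      fun i hh1 hh2 => ?_⟩
    by_cases him : i < m
    · exact hw1 i hh1 him
    · exact hw2 i (by omega) hh2
  | letin Γ Φ x τ1 τ2 e1 e2 t1 t2 γ1 γ2 n m k w h1 h2 ih1 ih2 =>
    obtain ⟨hle1, hs1, ho1, hγo1, hf1, hγf1, hw1⟩ := ih1 hΦ
    obtain ⟨hle2, hs2, ho2, hγo2, hf2, hγf2, hw2⟩ := ih2 hΦ
    have hΓ : ∀ y, y ≠ x → ∀ τ', (fun y => if y = x then some τ1 else Γ y) y = some τ' → Γ y = some τ' := by
      intro y hy τ' h'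
      simpa [hy] using h'
    have hx : (fun y => if y = x then some τ1 else Γ y) x = some τ1 := by simp
    refine ⟨le_trans hle1 hle2,
      TForm.shaped_tsubst hs2,
      TForm.okvT_tsubst hx hs1 ho1 hΓ ho2,
      ⟨hγo1, Form.okv_tsubst hx hs1 ho1 hΓ hγo2⟩,
      TForm.fvOKT_tsubst (TForm.fvOKT_mono (le_refl n) hle2 hf1)
        (TForm.fvOKT_mono hle1 (le_refl k) hf2),
      ⟨Form.fvOK_mono (le_refl n) hle2 hγf1,
        Form.fvOK_tsubst (TForm.fvOKT_mono (le_refl n) hle2 hf1)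
          (Form.fvOK_mono hle1 (le_refl k) hγf2)⟩,
      fun i hh1 hh2 => ?_⟩
    by_cases him : i < m
    · exact hw1 i hh1 him
    · exact hw2 i (by omega) hh2
  | call Γ Φ f a fi ta n w hf ha hw =>
    obtain ⟨hsa, hoa, hfa⟩ := compT_inv ha
    obtain ⟨fis, fiokv, figokv, fif, figf, fiw⟩ := hΦ f fi hf
    have hx : GammaF fi fi.arg = some fi.argTy := by simp [GammaF]
    have hΓ : ∀ y, y ≠ fi.arg → ∀ τ', GammaF fi y = some τ' → Γ y = some τ' := by
      intro y hy τ' h'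
      simp [GammaF, hy] at h'
    have hshift_t : (fi.tf.shift n).fvOKT n (n + fi.nflips) := by
      have := TForm.fvOKT_shift (k := n) fif
      exact TForm.fvOKT_mono (by omega) (by omega) this
    have hshift_g : (fi.gf.shift n).fvOK n (n + fi.nflips) := by
      have := Form.fvOK_shift (k := n) figf
      exact Form.fvOK_mono (by omega) (by omega) this
    refine ⟨by omega,
      TForm.shaped_tsubst (TForm.shaped_shift n fis),
      TForm.okvT_tsubst hx hsa hoa hΓ (TForm.okvT_shift n fiokv),
      Form.okv_tsubst hx hsa hoa hΓ (Form.okv_shift n figokv),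
      TForm.fvOKT_tsubst (hfa n (n + fi.nflips)) hshift_t,
      Form.fvOK_tsubst (hfa n (n + fi.nflips)) hshift_g,
      fun i hh1 hh2 => ?_⟩
    have hi : i - n < fi.nflips := by omega
    have e1 := hw (i - n) hi true
    have e2 := hw (i - n) hi false
    rw [show n + (i - n) = i from by omega] at e1 e2
    rw [e1, e2]
    exact fiw (i - n) hi



/-! ### The main correctness lemma for expressions -/

theorem tcomp_main {Γ : String → Option Ty} {Φ : String → Option FInfo} {e : Exp}
    {τ : Ty} {n m : ℕ} {t : TForm} {γ : Form} {w : ℕ → Bool → ℝ}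
    (h : TComp Γ Φ e τ n m t γ w) (T : String → Val → Val → ℝ)
    (hΦ : PhiOK Φ) (hT : FTOK Φ T) :
    ∀ ρ : String → Val, (∀ x τx, Γ x = some τx → (ρ x).hasTy τx) →
    ∀ v : Val, v.hasTy τ →
      (e.substEnv (fun x => some (ρ x))).sem T v = SSum n m w (COND t γ ρ v) := by
  induction h with
  | atom Γ Φ a τ t n w h =>
    intro ρ hρ v hv
    obtain ⟨u, hsub, huty, hueval⟩ := atom_correct h ρ hρ
    simp only [Exp.substEnv, hsub]
    rw [SSum_nil]
    unfold COND
    rw [hueval (fun _ => false)]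
    simp only [Form.substProg, Form.eval, Bool.and_true]
    rw [show Exp.sem T (.atom (.val u)) v = if v = u then 1 else 0 from by simp [Exp.sem]]
    by_cases hvu : v = u
    · subst hvu; simp
    · rw [if_neg hvu, if_neg (by simpa [eq_comm] using hvu)]
  | fst Γ Φ a τ1 τ2 t1 t2 n w h =>
    intro ρ hρ v hv
    obtain ⟨u, hsub, huty, hueval⟩ := atom_correct h ρ hρ
    cases u with
    | bool b => simp [Val.hasTy] at huty
    | pair u1 u2 =>
      simp only [Exp.substEnv, hsub]
      rw [SSum_nil]
      unfold COND
      have hev := hueval (fun _ => false)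
      simp only [TForm.substProgT, TForm.evalB] at hev
      injection hev with e1 e2
      rw [e1]
      simp only [Form.substProg, Form.eval, Bool.and_true]
      rw [show Exp.sem T (.fst (.val (.pair u1 u2))) v = if v = u1 then 1 else 0 from by
        simp [Exp.sem]]
      by_cases hvu : v = u1
      · subst hvu; simp
      · rw [if_neg hvu, if_neg (by simpa [eq_comm] using hvu)]
  | snd Γ Φ a τ1 τ2 t1 t2 n w h =>
    intro ρ hρ v hv
    obtain ⟨u, hsub, huty, hueval⟩ := atom_correct h ρ hρ
    cases u with
    | bool b => simp [Val.hasTy] at huty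
    | pair u1 u2 =>
      simp only [Exp.substEnv, hsub]
      rw [SSum_nil]
      unfold COND
      have hev := hueval (fun _ => false)
      simp only [TForm.substProgT, TForm.evalB] at hev
      injection hev with e1 e2
      rw [e2]
      simp only [Form.substProg, Form.eval, Bool.and_true]
      rw [show Exp.sem T (.snd (.val (.pair u1 u2))) v = if v = u2 then 1 else 0 from by
        simp [Exp.sem]]
      by_cases hvu : v = u2
      · subst hvu; simp
      · rw [if_neg hvu, if_neg (by simpa [eq_comm] using hvu)]
  | pair Γ Φ a1 a2 τ1 τ2 t1 t2 n w h1 h2 =>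
    intro ρ hρ v hv
    obtain ⟨u1, hsub1, huty1, hueval1⟩ := atom_correct h1 ρ hρ
    obtain ⟨u2, hsub2, huty2, hueval2⟩ := atom_correct h2 ρ hρ
    simp only [Exp.substEnv, hsub1, hsub2]
    rw [SSum_nil]
    unfold COND
    simp only [TForm.substProgT, TForm.evalB]
    simp only [hueval1 (fun _ => false), hueval2 (fun _ => false)]
    simp only [Form.substProg, Form.eval, Bool.and_true]
    rw [show Exp.sem T (.pair (.val u1) (.val u2)) v = if v = .pair u1 u2 then 1 else 0 from by
      simp [Exp.sem]]
    by_cases hvu : v = Val.pair u1 u2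
    · subst hvu; simp
    · rw [if_neg hvu, if_neg (by simpa [eq_comm] using hvu)]
  | flip Γ Φ θ n w h0 h1 hwt hwf =>
    intro ρ hρ v hv
    cases v with
    | pair a b => simp [Val.hasTy] at hv
    | bool b =>
      simp only [Exp.substEnv]
      rw [SSum_single]
      unfold COND
      simp only [TForm.substProgT, Form.substProg, TForm.evalB, Form.eval, Bool.and_true]
      rw [show Exp.sem T (.flip θ) (.bool b) = if b then θ else 1 - θ from by simp [Exp.sem]]
      cases b
      · simp [hwf]
      · simp [hwt]
  | obs Γ Φ a φa n w h =>
    intro ρ hρ v hv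
    obtain ⟨u, hsub, huty, hueval⟩ := atom_correct h ρ hρ
    cases u with
    | pair u1 u2 => simp [Val.hasTy] at huty
    | bool c =>
      simp only [Exp.substEnv, hsub]
      rw [SSum_nil]
      unfold COND
      have hev := hueval (fun _ => false)
      simp only [TForm.substProgT, TForm.evalB] at hev
      injection hev with hev
      simp only [TForm.substProgT, TForm.evalB, Form.substProg, Form.eval]
      rw [hev]
      cases c
      · rw [show Exp.sem T (.obs (.val (.bool false))) v = 0 from by simp [Exp.sem]]
        simp
      · rw [show Exp.sem T (.obs (.val (.bool true))) v = if v = .bool true then 1 else 0 from by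
          simp [Exp.sem]]
        by_cases hv1 : v = Val.bool true
        · subst hv1; simp
        · rw [if_neg hv1, if_neg (by simp [hv1, eq_comm])]
  | ite Γ Φ a eT eE τ φg tT tE γT γE n m k w hg hT' hE ihT ihE =>
    intro ρ hρ v hv
    obtain ⟨ug, hsub, hgty, hgeval⟩ := atom_correct hg ρ hρ
    obtain ⟨hle1, hs1, ho1, hγo1, hf1, hγf1, hw1⟩ := tcomp_inv hT' hΦ
    obtain ⟨hle2, hs2, ho2, hγo2, hf2, hγf2, hw2⟩ := tcomp_inv hE hΦ
    cases ug with
    | pair _ _ => simp [Val.hasTy] at hgty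
    | bool c =>
      have hgev : ∀ σ, (φg.substProg ρ).eval σ flE = c := by
        intro σ
        have := hgeval σ
        simp only [TForm.substProgT, TForm.evalB] at this
        injection this
      simp only [Exp.substEnv, hsub]
      cases c
      · -- guard false
        rw [show Exp.sem T (.ite (.val (.bool false)) (eT.substEnv (fun x => some (ρ x)))
            (eE.substEnv (fun x => some (ρ x)))) v
            = (eE.substEnv (fun x => some (ρ x))).sem T v from by simp [Exp.sem]]
        rw [ihE hΦ hT ρ hρ v hv]
        have hcond : ∀ σ,
            COND ((tT.band φg).tor (tE.band (.not φg)))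
              (.or (.and φg γT) (.and (.not φg) γE)) ρ v σ
            = ((fun _ => true) σ && COND tE γE ρ v σ) := by
          intro σ
          unfold COND
          rw [TForm.substProgT_tor, TForm.substProgT_band, TForm.substProgT_band]
          rw [show (Form.not φg).substProg ρ = .not (φg.substProg ρ) from rfl]
          rw [TForm.evalB_tor_band_right (TForm.shaped_substProgT hs1 ρ)
            (TForm.shaped_substProgT hs2 ρ) _ _ σ (hgev σ) (by simp [Form.eval, hgev σ])]
          simp only [Form.substProg, Form.eval]
          rw [hgev σ]
          simp
        rw [SSum_congr hcond,
          SSum_split n m k hle1 hle2 w (fun _ => true) (COND tE γE ρ v)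
            (fun σ σ' _ => rfl) (COND_congr hf2 hγf2 ρ v),
          SSum_true n m w hw1, one_mul]
      · -- guard true
        rw [show Exp.sem T (.ite (.val (.bool true)) (eT.substEnv (fun x => some (ρ x)))
            (eE.substEnv (fun x => some (ρ x)))) v
            = (eT.substEnv (fun x => some (ρ x))).sem T v from by simp [Exp.sem]]
        rw [ihT hΦ hT ρ hρ v hv]
        have hcond : ∀ σ,
            COND ((tT.band φg).tor (tE.band (.not φg)))
              (.or (.and φg γT) (.and (.not φg) γE)) ρ v σ
            = (COND tT γT ρ v σ && (fun _ => true) σ) := by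
          intro σ
          unfold COND
          rw [TForm.substProgT_tor, TForm.substProgT_band, TForm.substProgT_band]
          rw [show (Form.not φg).substProg ρ = .not (φg.substProg ρ) from rfl]
          rw [TForm.evalB_tor_band_left (TForm.shaped_substProgT hs1 ρ)
            (TForm.shaped_substProgT hs2 ρ) _ _ σ (hgev σ) (by simp [Form.eval, hgev σ])]
          simp only [Form.substProg, Form.eval]
          rw [hgev σ]
          simp
        rw [SSum_congr hcond,
          SSum_split n m k hle1 hle2 w (COND tT γT ρ v) (fun _ => true)
            (COND_congr hf1 hγf1 ρ v) (fun σ σ' _ => rfl),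
          SSum_true m k w hw2, mul_one]
  | letin Γ Φ x τ1 τ2 e1 e2 t1 t2 γ1 γ2 n m k w h1 h2 ih1 ih2 =>
    intro ρ hρ v hv
    obtain ⟨hle1, hs1, ho1, hγo1, hf1, hγf1, hw1⟩ := tcomp_inv h1 hΦ
    obtain ⟨hle2, hs2, ho2, hγo2, hf2, hγf2, hw2⟩ := tcomp_inv h2 hΦ
    have hx : (fun y => if y = x then some τ1 else Γ y) x = some τ1 := by simp
    simp only [Exp.substEnv]
    rw [show Exp.sem T (.letin x τ1 (e1.substEnv (fun y => some (ρ y)))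
        (e2.substEnv (fun y => if y = x then none else some (ρ y)))) v
        = (τ1.vals.map (fun v' =>
            (e1.substEnv (fun y => some (ρ y))).sem T v' *
            (((e2.substEnv (fun y => if y = x then none else some (ρ y))).substEnv
              (fun y => if y = x then some v' else none)).sem T v))).sum from by
      simp [Exp.sem]]
    have hmap : ∀ v' ∈ τ1.vals,
        (e1.substEnv (fun y => some (ρ y))).sem T v' *
          (((e2.substEnv (fun y => if y = x then none else some (ρ y))).substEnv
            (fun y => if y = x then some v' else none)).sem T v)
        = SSum n k w (fun σ =>
            COND t1 γ1 ρ v' σ && COND t2 γ2 (fun y => if y = x then v' else ρ y) v σ) := by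
      intro v' hv'
      have hty' : v'.hasTy τ1 := (Val.mem_vals_iff τ1 v').1 hv'
      have hsub2 : (e2.substEnv (fun y => if y = x then none else some (ρ y))).substEnv
          (fun y => if y = x then some v' else none)
          = e2.substEnv (fun y => some (if y = x then v' else ρ y)) := by
        rw [Exp.substEnv_substEnv]
        congr 1
        funext y
        by_cases hy : y = x <;> simp [hy]
      have hρ' : ∀ y τy, (fun y => if y = x then some τ1 else Γ y) y = some τy →
          ((fun y => if y = x then v' else ρ y) y).hasTy τy := by
        intro y τy hy
        by_cases hxy : y = x
        · subst hxy
          simp only [if_pos rfl] at hy ⊢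
          injection hy with hy
          subst hy
          exact hty'
        · simp only [hxy, if_false] at hy ⊢
          exact hρ y τy hy
      rw [ih1 hΦ hT ρ hρ v' hty', hsub2, ih2 hΦ hT _ hρ' v hv]
      exact (SSum_split n m k hle1 hle2 w _ _ (COND_congr hf1 hγf1 ρ v')
        (COND_congr hf2 hγf2 _ v)).symm
    rw [List.map_congr_left hmap]
    simp only [SSum]
    rw [list_sum_comm]
    refine Finset.sum_congr rfl (fun s _ => ?_)
    simp only [COND]
    delta COND
    beta_reduce
    rw [list_step τ1.vals (Ty.vals_nodup τ1)
      ((t1.substProgT ρ).evalB (fun i => decide (i ∈ s)))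
      ((Val.mem_vals_iff _ _).2
        (TForm.evalB_hasTy (TForm.shaped_substProgT hs1 ρ) (fun i => decide (i ∈ s))))
      ((γ1.substProg ρ).eval (fun i => decide (i ∈ s)) flE)
      (fun v' => decide (((t2.substProgT (fun y => if y = x then v' else ρ y)).evalB
          (fun i => decide (i ∈ s))) = v)
        && (γ2.substProg (fun y => if y = x then v' else ρ y)).eval (fun i => decide (i ∈ s)) flE)]
    have hceq : (decide ((((t2.tsubst x t1).substProgT ρ).evalB (fun i => decide (i ∈ s))) = v)
          && ((Form.and γ1 (γ2.tsubst x t1)).substProg ρ).eval (fun i => decide (i ∈ s)) flE)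
        = ((γ1.substProg ρ).eval (fun i => decide (i ∈ s)) flE &&
            (decide (((t2.substProgT (fun y => if y = x then
                (t1.substProgT ρ).evalB (fun i => decide (i ∈ s)) else ρ y)).evalB
                (fun i => decide (i ∈ s))) = v)
              && (γ2.substProg (fun y => if y = x then
                (t1.substProgT ρ).evalB (fun i => decide (i ∈ s)) else ρ y)).eval
                (fun i => decide (i ∈ s)) flE)) := by
      simp only [Form.substProg, Form.eval]
      rw [TForm.tsubst_evalB hx hs1 (fun i => decide (i ∈ s)) ρ ho2,
        Form.tsubst_eval hx hs1 (fun i => decide (i ∈ s)) ρ hγo2]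
      cases (γ1.substProg ρ).eval (fun i => decide (i ∈ s)) flE <;> simp
    simp only [hceq]
  | call Γ Φ f a fi ta n w hf ha hw =>
    intro ρ hρ v hv
    obtain ⟨u, hsub, huty, hueval⟩ := atom_correct ha ρ hρ
    obtain ⟨hsa, hoa, hfa⟩ := compT_inv ha
    obtain ⟨fis, fiokv, figokv, fif, figf, fiw⟩ := hΦ f fi hf
    simp only [Exp.substEnv, hsub]
    rw [show Exp.sem T (.call f (.val u)) v = T f u v from by simp [Exp.sem]]
    rw [hT f fi hf u huty v hv]
    refine (SSum_shift n fi.nflips w fi.wf hw _ _ ?_).symm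
    intro σ
    unfold COND
    have hx : GammaF fi fi.arg = some fi.argTy := by simp [GammaF]
    rw [TForm.tsubst_evalB hx hsa σ ρ (TForm.okvT_shift n fiokv),
      Form.tsubst_eval hx hsa σ ρ (Form.okv_shift n figokv)]
    rw [hueval σ]
    have hag : ∀ y, (∃ τ', GammaF fi y = some τ') →
        (fun y => if y = fi.arg then u else ρ y) y = (fun _ => u) y := by
      intro y ⟨τ', hy⟩
      simp only [GammaF] at hy
      by_cases hya : y = fi.arg
      · simp [hya]
      · simp [hya] at hy
    rw [TForm.substProgT_congr hag (TForm.okvT_shift n fiokv),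
      Form.substProg_congr hag (Form.okv_shift n figokv)]
    rw [TForm.substProgT_shift, TForm.evalB_shift, Form.substProg_shift, Form.eval_shift]

/-! ### Program-level correctness -/

theorem pcomp_main {Φ : String → Option FInfo} {p : Prog} {τ : Ty} {t : TForm} {γ : Form}
    {n : ℕ} {w : ℕ → Bool → ℝ} (h : PComp Φ p τ t γ n w) :
    ∀ T : String → Val → Val → ℝ, PhiOK Φ → FTOK Φ T →
    ∀ v : Val, v.hasTy τ → p.sem T v = WMC n ((t.tiff v.toForm).and γ) w := by
  induction h with
  | main Φ e τ t γ n w h =>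
    intro T hΦ hT v hv
    obtain ⟨_, hs, ho, hγo, hf, hγf, _⟩ := tcomp_inv h hΦ
    have hnone : ∀ y : String, (fun _ => none : String → Option Ty) y = none := fun _ => rfl
    have hρ0 : ∀ (x : String) (τx : Ty), (fun _ => none : String → Option Ty) x = some τx →
        ((fun _ => Val.bool false) x).hasTy τx := by
      intro x τx hx
      cases hx
    have heq := tcomp_main h T hΦ hT (fun _ => Val.bool false) hρ0 v hv
    have hsub : e.substEnv (fun _ => some (Val.bool false)) = e := by
      rw [tcomp_substEnv_congr h (fun _ => some (Val.bool false)) (fun _ => none)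
        (fun x hx => absurd rfl hx)]
      exact Exp.substEnv_none e
    rw [hsub] at heq
    show e.sem T v = _
    rw [heq, WMC_eq_SSum]
    apply SSum_congr
    intro σ
    unfold COND
    rw [TForm.substProgT_closed hnone _ ho, Form.substProg_closed hnone _ hγo]
    simp only [Form.eval, tiff_eval]
  | fdef Φ f x τ1 τ2 body rest τ t γ n w k tf gf wf hbody hrest ih =>
    intro T hΦ hT v hv
    show Prog.sem (fun g => if g = f then
        (fun varg => (body.substEnv (fun y => if y = x then some varg else none)).sem T)
      else T g) rest v = _
    obtain ⟨_, hbs, hbo, hbγo, hbf, hbγf, hbw⟩ := tcomp_inv hbody hΦ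
    apply ih
    · -- PhiOK Φ'
      intro g fig hg
      dsimp only at hg
      by_cases hgf : g = f
      · subst hgf
        rw [if_pos rfl] at hg
        injection hg with hg
        subst hg
        refine ⟨hbs, hbo, hbγo, hbf, hbγf, fun i hi => hbw i (by omega) hi⟩
      · rw [if_neg hgf] at hg
        exact hΦ g fig hg
    · -- FTOK Φ' T'
      intro g fig hg u huty v' hv'
      dsimp only at hg ⊢
      by_cases hgf : g = f
      · subst hgf
        rw [if_pos rfl] at hg
        injection hg with hg
        subst hg
        rw [if_pos rfl]
        have hρu : ∀ (y : String) (τy : Ty),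
            (fun y => if y = x then some τ1 else none) y = some τy →
            ((fun _ => u) y).hasTy τy := by
          intro y τy hy
          by_cases hyx : y = x
          · simp only [hyx, if_pos rfl] at hy
            injection hy with hy
            subst hy
            exact huty
          · simp [hyx] at hy
        have hmain := tcomp_main hbody T hΦ hT (fun _ => u) hρu v' hv'
        have hsub : body.substEnv (fun y => if y = x then some u else none)
            = body.substEnv (fun _ => some u) := by
          apply tcomp_substEnv_congr hbody
          intro y hy
          by_cases hyx : y = x
          · simp [hyx]
          · simp [hyx] at hy
        rw [hsub]
        exact hmain
      · rw [if_neg hgf] at hg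
        rw [if_neg hgf]
        exact hT g fig hg u huty v' hv'
    · exact hv

/-- **Typed Program Correctness.**  If a closed Dice program `p` compiles as
`∅, ∅ ⊢ p : τ ⤳ (φ̂, γ, w)`, then for any value `v : τ` the unnormalized
semantics (starting from the empty function table) satisfies
`⟦p⟧(v) = WMC((φ̂ ⇔τ v) ∧ γ, w)`. -/
theorem typed_program_correctness
    (p : Prog) (τ : Ty) (t : TForm) (γ : Form) (n : ℕ) (w : ℕ → Bool → ℝ)
    (h : PComp (fun _ => none) p τ t γ n w)
    (v : Val) (hv : v.hasTy τ) :
    p.sem (fun _ _ _ => 0) v = WMC n ((t.tiff v.toForm).and γ) w := by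
  have hΦ : PhiOK (fun _ => none) := fun f fi hf => by cases hf
  have hT : FTOK (fun _ => none) (fun _ _ _ => 0) := fun f fi hf => by cases hf
  exact pcomp_main h _ hΦ hT v hv
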